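/- arXiv:1510.05374 — 8 statements merged into one kernel-verified Lean document; each statement's English description precedes it below -/
import Mathlib

section
/- The elements b_i := T_i T_{i+1} ⋯ T_{n-1} · T_n · T_{n-1} ⋯ T_{i+1} T_i for i = 1, …, n (so b_n = T_n) pairwise commute: b_i b_j = b_j b_i for all 1 ≤ i, j ≤ n. -/
/-- The ordered product `T a * T (a+1) * ⋯ * T b` (equal to `1` when `b < a`). -/
def upProd {G : Type*} [Monoid G] (T : ℕ → G) (a b : ℕ) : G :=
  ((List.range (b + 1 - a)).map fun k => T (a + k)).prod

/-- The ordered product `T b * T (b-1) * ⋯ * T a` (equal to `1` when `b < a`). -/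
def downProd {G : Type*} [Monoid G] (T : ℕ → G) (b a : ℕ) : G :=
  ((List.range (b + 1 - a)).map fun k => T (b - k)).prod

lemma upProd_of_lt {G : Type*} [Monoid G] (T : ℕ → G) {a b : ℕ} (h : b < a) :
    upProd T a b = 1 := by
  unfold upProd
  have : b + 1 - a = 0 := by omega
  simp [this]

lemma downProd_of_lt {G : Type*} [Monoid G] (T : ℕ → G) {a b : ℕ} (h : b < a) :
    downProd T b a = 1 := by
  unfold downProd
  have : b + 1 - a = 0 := by omega
  simp [this]

lemma upProd_step {G : Type*} [Monoid G] (T : ℕ → G) {a b : ℕ} (h : a ≤ b) :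
    upProd T a b = T a * upProd T (a + 1) b := by
  unfold upProd
  have h1 : b + 1 - a = (b - a) + 1 := by omega
  have h2 : b + 1 - (a + 1) = b - a := by omega
  rw [h1, h2, List.range_succ_eq_map]
  simp only [List.map_cons, List.map_map, List.prod_cons, Nat.add_zero]
  have h3 : ((fun k => T (a + k)) ∘ Nat.succ) = fun k => T (a + 1 + k) := by
    funext k
    simp only [Function.comp_apply, Nat.succ_eq_add_one]
    congr 1
    omega
  rw [h3]

lemma downProd_step {G : Type*} [Monoid G] (T : ℕ → G) {a b : ℕ} (h : a ≤ b) :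
    downProd T b a = downProd T b (a + 1) * T a := by
  unfold downProd
  have h1 : b + 1 - a = (b - a) + 1 := by omega
  have h2 : b + 1 - (a + 1) = b - a := by omega
  rw [h1, h2, List.range_succ, List.map_append, List.prod_append]
  simp only [List.map_cons, List.map_nil, List.prod_cons, List.prod_nil, mul_one]
  have : b - (b - a) = a := by omega
  rw [this]

lemma commute_upProd {G : Type*} [Monoid G] (T : ℕ → G) {x : G} {a b : ℕ}
    (h : ∀ m, a ≤ m → m ≤ b → Commute x (T m)) : Commute x (upProd T a b) := by
  apply Commute.list_prod_right
  intro y hy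
  simp only [List.mem_map, List.mem_range] at hy
  obtain ⟨k, hk, rfl⟩ := hy
  exact h _ (by omega) (by omega)

lemma commute_downProd {G : Type*} [Monoid G] (T : ℕ → G) {x : G} {a b : ℕ}
    (h : ∀ m, a ≤ m → m ≤ b → Commute x (T m)) : Commute x (downProd T b a) := by
  apply Commute.list_prod_right
  intro y hy
  simp only [List.mem_map, List.mem_range] at hy
  obtain ⟨k, hk, rfl⟩ := hy
  exact h _ (by omega) (by omega)

lemma keyalg {G : Type*} [Group G] (s t c : G)
    (hst : s * t * s = t * s * t) (hsc : s * c = c * s)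
    (htc : t * c * t * c = c * (t * c * t)) :
    s * (t * c * t) * s * (t * c * t) = t * c * t * (s * (t * c * t) * s) := by
  have hst' : ∀ x : G, t * (s * (t * x)) = s * (t * (s * x)) := by
    intro x
    rw [← mul_assoc, ← mul_assoc, ← hst, mul_assoc, mul_assoc]
  have hst'' : ∀ x : G, s * (t * (s * x)) = t * (s * (t * x)) := fun x => (hst' x).symm
  have hts : t * (s * t) = s * (t * s) := by rw [← mul_assoc, ← hst, mul_assoc]
  have hsc' : ∀ x : G, s * (c * x) = c * (s * x) := by
    intro x; rw [← mul_assoc, hsc, mul_assoc]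
  have hcs' : ∀ x : G, c * (s * x) = s * (c * x) := fun x => (hsc' x).symm
  have htc' : ∀ x : G, t * (c * (t * (c * x))) = c * (t * (c * (t * x))) := by
    intro x
    calc t * (c * (t * (c * x))) = (t * c * t * c) * x := by simp [mul_assoc]
    _ = (c * (t * c * t)) * x := by rw [htc]
    _ = c * (t * (c * (t * x))) := by simp [mul_assoc]
  simp only [mul_assoc]
  conv_lhs => rw [hst' (c * t), hcs' (t * (s * (c * t))), hsc' t,
    hst'' (c * (t * (c * (s * t)))), htc' (s * t), hts, hcs' (t * s)]
  conv_rhs => rw [hst' (c * (t * s)), hcs' (t * (s * (c * (t * s))))]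

/-- The Jucys–Murphy type elements
`b_i = T_i T_{i+1} ⋯ T_{n-1} · T_n · T_{n-1} ⋯ T_{i+1} T_i` in the affine braid group
of type `C⁽¹⁾` pairwise commute. -/
theorem jucys_murphy_b_commute {G : Type*} [Group G] (n : ℕ) (hn : 2 ≤ n) (T : ℕ → G)
    (hbraid : ∀ i, 1 ≤ i → i ≤ n - 2 →
      T i * T (i + 1) * T i = T (i + 1) * T i * T (i + 1))
    (hcomm : ∀ i j, i ≤ n → j ≤ n → i + 2 ≤ j → T i * T j = T j * T i)
    (hC0 : T 1 * T 0 * T 1 * T 0 = T 0 * T 1 * T 0 * T 1)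
    (hCn : T (n - 1) * T n * T (n - 1) * T n = T n * T (n - 1) * T n * T (n - 1)) :
    ∀ i j, 1 ≤ i → i ≤ n → 1 ≤ j → j ≤ n →
      (upProd T i (n - 1) * T n * downProd T (n - 1) i) *
        (upProd T j (n - 1) * T n * downProd T (n - 1) j) =
      (upProd T j (n - 1) * T n * downProd T (n - 1) j) *
        (upProd T i (n - 1) * T n * downProd T (n - 1) i) := by
  set B : ℕ → G := fun i => upProd T i (n - 1) * T n * downProd T (n - 1) i with hBdef
  -- B n = T n
  have hBn : B n = T n := by
    simp only [hBdef]
    rw [upProd_of_lt T (by omega), downProd_of_lt T (by omega), one_mul, mul_one]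
  -- recursion B i = T i * B (i+1) * T i for i ≤ n-1
  have hBrec : ∀ i, i ≤ n - 1 → B i = T i * B (i + 1) * T i := by
    intro i hi
    simp only [hBdef]
    rw [upProd_step T hi, downProd_step T hi]
    simp only [mul_assoc]
  -- T k commutes with B j for k + 2 ≤ j, j ≤ n, k ≤ n
  have hTB : ∀ k j, k ≤ n → j ≤ n → k + 2 ≤ j → Commute (T k) (B j) := by
    intro k j hk hj hkj
    have h1 : Commute (T k) (upProd T j (n - 1)) := by
      apply commute_upProd
      intro m hm1 hm2
      exact hcomm k m hk (by omega) (by omega)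
    have h2 : Commute (T k) (T n) := hcomm k n hk le_rfl (by omega)
    have h3 : Commute (T k) (downProd T (n - 1) j) := by
      apply commute_downProd
      intro m hm1 hm2
      exact hcomm k m hk (by omega) (by omega)
    exact (h1.mul_right h2).mul_right h3
  -- adjacent commutation, by downward induction
  have adj : ∀ d i, i = n - 1 - d → 1 ≤ i → B i * B (i + 1) = B (i + 1) * B i := by
    intro d
    induction d with
    | zero =>
      intro i hi hi1
      have hieq : i = n - 1 := by omega
      subst hieq
      have hn1 : n - 1 + 1 = n := by omega
      rw [hn1, hBn, hBrec (n - 1) le_rfl, hn1, hBn]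
      calc T (n - 1) * T n * T (n - 1) * T n = T n * (T (n - 1) * T n * T (n - 1)) := by
            rw [← mul_assoc, ← mul_assoc, hCn]
        _ = T n * (T (n - 1) * T n * T (n - 1)) := rfl
    | succ d ih =>
      intro i hi hi1
      by_cases hd : d + 1 ≤ n - 2
      · -- i = n - 1 - (d+1) ≤ n - 3 + ... ; i + 1 = n - 1 - d
        have hi1eq : i + 1 = n - 1 - d := by omega
        have hadj := ih (i + 1) hi1eq (by omega)
        -- B (i+1) = T (i+1) * B (i+2) * T (i+1)
        have hrec1 : B (i + 1) = T (i + 1) * B (i + 2) * T (i + 1) := by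
          have := hBrec (i + 1) (by omega)
          simpa using this
        have hrec0 : B i = T i * B (i + 1) * T i := hBrec i (by omega)
        set t := T (i + 1)
        set s := T i
        set c := B (i + 2)
        have hst : s * t * s = t * s * t := hbraid i hi1 (by omega)
        have hsc : s * c = c * s := by
          have := hTB i (i + 2) (by omega) (by omega) (by omega)
          exact this.eq
        have htc : t * c * t * c = c * (t * c * t) := by
          have h := hadj
          rw [hrec1] at h
          -- h : (t * c * t) * B (i+2) = B (i+2) * (t * c * t)
          calc t * c * t * c = (t * c * t) * c := by rw [mul_assoc, mul_assoc, ← mul_assoc]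
            _ = c * (t * c * t) := h
        rw [hrec0, hrec1]
        exact keyalg s t c hst hsc htc
      · -- d + 1 > n - 2 means i = n - 1 - (d+1) = 0, contradiction with 1 ≤ i
        omega
  -- full claim by induction on the gap
  have claim : ∀ k, ∀ i, 1 ≤ i → i + k ≤ n → B i * B (i + k) = B (i + k) * B i := by
    intro k
    induction k using Nat.strong_induction_on with
    | _ k ih =>
      intro i hi hik
      match k with
      | 0 => rfl
      | 1 =>
        exact adj (n - 1 - i) i (by omega) hi
      | (m + 2) =>
        have hrec0 : B i = T i * B (i + 1) * T i := hBrec i (by omega)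
        have h1 : Commute (T i) (B (i + (m + 2))) :=
          hTB i (i + (m + 2)) (by omega) (by omega) (by omega)
        have h2 : Commute (B (i + 1)) (B (i + (m + 2))) := by
          have := ih (m + 1) (by omega) (i + 1) (by omega) (by omega)
          have heq : i + 1 + (m + 1) = i + (m + 2) := by omega
          rw [heq] at this
          exact this
        have : Commute (B i) (B (i + (m + 2))) := by
          rw [hrec0]
          exact (h1.mul_left h2).mul_left h1 |>.symm.symm
        exact this.eq
  -- conclude
  intro i j hi hin hj hjn
  show B i * B j = B j * B i
  rcases le_total i j with h | h
  · have := claim (j - i) i hi (by omega)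
    have heq : i + (j - i) = j := by omega
    rw [heq] at this
    exact this
  · have := claim (i - j) j hj (by omega)
    have heq : j + (i - j) = i := by omega
    rw [heq] at this
    exact this.symm
end

section
/- With X := T_0 T_1 ⋯ T_n, one has X^{-1} T_1 X = X T_{n-1} X^{-1}, and the element T̄_n := X^{-1} T_1 X satisfies the periodic braid relations T̄_n T_{n-1} T̄_n = T_{n-1} T̄_n T_{n-1} and T̄_n T_1 T̄_n = T_1 T̄_n T_1. -/
theorem upProd_empty {G : Type*} [Monoid G] (T : ℕ → G) (a b : ℕ) (h : b + 1 ≤ a) :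
    upProd T a b = 1 := by
  unfold upProd
  rw [Nat.sub_eq_zero_of_le h]
  simp

theorem upProd_single {G : Type*} [Monoid G] (T : ℕ → G) (a : ℕ) : upProd T a a = T a := by
  unfold upProd
  simp [List.range_succ]

theorem upProd_split {G : Type*} [Monoid G] (T : ℕ → G) (a c b : ℕ) (h1 : a ≤ c + 1)
    (h2 : c ≤ b) : upProd T a b = upProd T a c * upProd T (c + 1) b := by
  unfold upProd
  have h3 : b + 1 - a = (c + 1 - a) + (b + 1 - (c + 1)) := by omega
  rw [h3, List.range_add, List.map_append, List.prod_append, List.map_map]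
  congr 1
  congr 1
  apply List.map_congr_left
  intro k hk
  simp only [List.mem_range] at hk
  simp only [Function.comp]
  congr 1
  omega

theorem upProd_commute {G : Type*} [Monoid G] (T : ℕ → G) (a b : ℕ) (g : G)
    (h : ∀ k, a ≤ k → k ≤ b → Commute g (T k)) : Commute g (upProd T a b) := by
  apply Commute.list_prod_right
  intro x hx
  simp only [List.mem_map, List.mem_range] at hx
  obtain ⟨k, hk, rfl⟩ := hx
  exact h (a + k) (by omega) (by omega)

theorem upProd_succ_right {G : Type*} [Monoid G] (T : ℕ → G) (a b : ℕ) (h : a ≤ b + 1) :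
    upProd T a (b + 1) = upProd T a b * T (b + 1) := by
  rw [upProd_split T a b (b + 1) h (by omega), upProd_single]

theorem chain_shift {G : Type*} [Monoid G] (n : ℕ) (T : ℕ → G)
    (hbraid : ∀ i, 1 ≤ i → i ≤ n - 2 →
      T i * T (i + 1) * T i = T (i + 1) * T i * T (i + 1))
    (hcomm : ∀ i j, i ≤ n → j ≤ n → i + 2 ≤ j → T i * T j = T j * T i)
    (a b j : ℕ) (haj : a ≤ j) (h1j : 1 ≤ j) (hjb : j + 1 ≤ b) (hbn : b ≤ n)
    (hjn : j ≤ n - 2) :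
    upProd T a b * T j = T (j + 1) * upProd T a b := by
  have hn3 : 3 ≤ n := by omega
  have hsplit : upProd T a b = upProd T a (j + 1) * upProd T (j + 2) b :=
    upProd_split T a (j + 1) b (by omega) (by omega)
  have hsplit2 : upProd T a (j + 1) = upProd T a (j - 1) * (T j * T (j + 1)) := by
    have h := upProd_split T a (j - 1) (j + 1) (by omega) (by omega)
    have h2 : j - 1 + 1 = j := by omega
    rw [h2] at h
    rw [h, upProd_split T j j (j + 1) (by omega) (by omega), upProd_single, upProd_single]
  have c1 : Commute (T j) (upProd T (j + 2) b) := by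
    apply upProd_commute
    intro k hk1 hk2
    exact hcomm j k (by omega) (by omega) (by omega)
  have c2 : Commute (T (j + 1)) (upProd T a (j - 1)) := by
    apply upProd_commute
    intro k hk1 hk2
    exact (hcomm k (j + 1) (by omega) (by omega) (by omega)).symm
  calc upProd T a b * T j
      = upProd T a (j + 1) * (upProd T (j + 2) b * T j) := by rw [hsplit, mul_assoc]
    _ = upProd T a (j + 1) * (T j * upProd T (j + 2) b) := by rw [← c1.eq]
    _ = upProd T a (j - 1) * (T j * T (j + 1) * T j) * upProd T (j + 2) b := by
        rw [hsplit2]; simp only [mul_assoc]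
    _ = upProd T a (j - 1) * (T (j + 1) * (T j * T (j + 1))) * upProd T (j + 2) b := by
        rw [hbraid j h1j hjn]; simp only [mul_assoc]
    _ = T (j + 1) * (upProd T a (j - 1) * (T j * T (j + 1))) * upProd T (j + 2) b := by
        rw [← mul_assoc (upProd T a (j-1)), ← c2.eq]; simp only [mul_assoc]
    _ = T (j + 1) * upProd T a b := by rw [← hsplit2, hsplit, mul_assoc]

theorem iter_shift {G : Type*} [Monoid G] (n : ℕ) (T : ℕ → G)
    (hbraid : ∀ i, 1 ≤ i → i ≤ n - 2 →
      T i * T (i + 1) * T i = T (i + 1) * T i * T (i + 1))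
    (hcomm : ∀ i j, i ≤ n → j ≤ n → i + 2 ≤ j → T i * T j = T j * T i)
    (hn : 3 ≤ n) (m : ℕ) (hm : m ≤ n - 2) :
    upProd T 1 n * upProd T 1 m = upProd T 2 (m + 1) * upProd T 1 n := by
  induction m with
  | zero =>
      rw [upProd_empty T 1 0 (by omega), upProd_empty T 2 1 (by omega), mul_one, one_mul]
  | succ m ih =>
      have hm' : m ≤ n - 2 := by omega
      rw [upProd_succ_right T 1 m (by omega), upProd_succ_right T 2 (m + 1) (by omega),
        ← mul_assoc, ih hm', mul_assoc, mul_assoc]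
      congr 1
      exact chain_shift n T hbraid hcomm 1 n (m + 1) (by omega) (by omega) (by omega)
        (by omega) (by omega)

theorem conj_braid {G : Type*} [Group G] (x a b : G) (h : a * b * a = b * a * b) :
    (x * a * x⁻¹) * (x * b * x⁻¹) * (x * a * x⁻¹) =
      (x * b * x⁻¹) * (x * a * x⁻¹) * (x * b * x⁻¹) := by
  calc (x * a * x⁻¹) * (x * b * x⁻¹) * (x * a * x⁻¹) = x * (a * b * a) * x⁻¹ := by group
    _ = x * (b * a * b) * x⁻¹ := by rw [h]
    _ = (x * b * x⁻¹) * (x * a * x⁻¹) * (x * b * x⁻¹) := by group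

/-- In the affine braid group of type `C⁽¹⁾`, with `X = T_0 T_1 ⋯ T_n` one has
`X⁻¹ T_1 X = X T_{n-1} X⁻¹`, and the element `T̄_n = X⁻¹ T_1 X` satisfies the periodic
braid relations with `T_{n-1}` and with `T_1`. -/
theorem Tbar_periodic_braid {G : Type*} [Group G] (n : ℕ) (hn : 3 ≤ n) (T : ℕ → G)
    (hbraid : ∀ i, 1 ≤ i → i ≤ n - 2 →
      T i * T (i + 1) * T i = T (i + 1) * T i * T (i + 1))
    (hcomm : ∀ i j, i ≤ n → j ≤ n → i + 2 ≤ j → T i * T j = T j * T i)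
    (hC0 : T 1 * T 0 * T 1 * T 0 = T 0 * T 1 * T 0 * T 1)
    (hCn : T (n - 1) * T n * T (n - 1) * T n = T n * T (n - 1) * T n * T (n - 1)) :
    (upProd T 0 n)⁻¹ * T 1 * upProd T 0 n = upProd T 0 n * T (n - 1) * (upProd T 0 n)⁻¹ ∧
    ((upProd T 0 n)⁻¹ * T 1 * upProd T 0 n) * T (n - 1) *
        ((upProd T 0 n)⁻¹ * T 1 * upProd T 0 n) =
      T (n - 1) * ((upProd T 0 n)⁻¹ * T 1 * upProd T 0 n) * T (n - 1) ∧
    ((upProd T 0 n)⁻¹ * T 1 * upProd T 0 n) * T 1 *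
        ((upProd T 0 n)⁻¹ * T 1 * upProd T 0 n) =
      T 1 * ((upProd T 0 n)⁻¹ * T 1 * upProd T 0 n) * T 1 := by
  obtain ⟨m, rfl⟩ : ∃ m, n = m + 3 := ⟨n - 3, by omega⟩
  have h1 : m + 3 - 1 = m + 2 := by omega
  rw [h1]
  set X := upProd T 0 (m + 3) with hXdef
  set Y := upProd T 1 (m + 3) with hYdef
  set Z := upProd T 2 (m + 3) with hZdef
  set W := upProd T 1 (m + 1) with hWdef
  set V := upProd T 2 (m + 2) with hVdef
  -- basic decompositions
  have hXY : X = T 0 * Y := by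
    rw [hXdef, hYdef, upProd_split T 0 0 (m + 3) (by omega) (by omega), upProd_single]
  have hYZ : Y = T 1 * Z := by
    rw [hYdef, hZdef, upProd_split T 1 1 (m + 3) (by omega) (by omega), upProd_single]
  have hZV : Z = V * T (m + 3) := by
    rw [hZdef, hVdef]; exact upProd_succ_right T 2 (m + 2) (by omega)
  have hYW : Y = W * (T (m + 2) * T (m + 3)) := by
    rw [hYdef, hWdef]
    have e1 : upProd T 1 (m + 3) = upProd T 1 (m + 2) * T (m + 3) :=
      upProd_succ_right T 1 (m + 2) (by omega)
    have e2 : upProd T 1 (m + 2) = upProd T 1 (m + 1) * T (m + 2) :=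
      upProd_succ_right T 1 (m + 1) (by omega)
    rw [e1, e2, mul_assoc]
  -- commutation facts
  have c0Z : Commute (T 0) Z := by
    rw [hZdef]
    apply upProd_commute
    intro k hk1 hk2
    exact hcomm 0 k (by omega) (by omega) (by omega)
  have cnW : Commute (T (m + 3)) W := by
    rw [hWdef]
    apply upProd_commute
    intro k hk1 hk2
    exact (hcomm k (m + 3) (by omega) (by omega) (by omega)).symm
  have c0Zg : ∀ g : G, Z * (T 0 * g) = T 0 * (Z * g) := by
    intro g; rw [← mul_assoc, ← mul_assoc, ← c0Z.eq]
  have cnWg : ∀ g : G, T (m + 3) * (W * g) = W * (T (m + 3) * g) := by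
    intro g; rw [← mul_assoc, ← mul_assoc, cnW.eq]
  -- shifts
  have sh1 : X * T 1 = T 2 * X :=
    chain_shift (m + 3) T hbraid hcomm 0 (m + 3) 1 (by omega) (by omega) (by omega)
      (by omega) (by omega)
  have sh2 : X * T (m + 1) = T (m + 2) * X :=
    chain_shift (m + 3) T hbraid hcomm 0 (m + 3) (m + 1) (by omega) (by omega) (by omega)
      (by omega) (by omega)
  have shW : Y * W = V * Y := by
    rw [hYdef, hWdef, hVdef]
    exact iter_shift (m + 3) T hbraid hcomm (by omega) (m + 1) (by omega)
  have shWg : ∀ g : G, Y * (W * g) = V * (Y * g) := by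
    intro g; rw [← mul_assoc, ← mul_assoc, shW]
  -- the C-relations in convenient form
  have hC0g : ∀ g : G, T 1 * (T 0 * (T 1 * (T 0 * g))) = T 0 * (T 1 * (T 0 * (T 1 * g))) := by
    intro g; simp only [← mul_assoc]; rw [hC0]
  have hCn2 : T (m + 2) * T (m + 3) * T (m + 2) * T (m + 3)
      = T (m + 3) * T (m + 2) * T (m + 3) * T (m + 2) := hCn
  have hCn3 : T (m + 2) * (T (m + 3) * (T (m + 2) * T (m + 3)))
      = T (m + 3) * (T (m + 2) * (T (m + 3) * T (m + 2))) := by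
    simp only [mul_assoc] at hCn2; exact hCn2
  -- key product computation : Z * (Y * T (m+2)) = Y * Y
  have hZY : Z * (Y * T (m + 2)) = Y * Y := by
    have lhs : Z * (Y * T (m + 2))
        = V * (W * (T (m + 2) * (T (m + 3) * (T (m + 2) * T (m + 3))))) := by
      calc Z * (Y * T (m + 2))
          = V * (T (m + 3) * (W * (T (m + 2) * (T (m + 3) * T (m + 2))))) := by
            rw [hZV, hYW]; simp only [mul_assoc]
        _ = V * (W * (T (m + 3) * (T (m + 2) * (T (m + 3) * T (m + 2))))) := by rw [cnWg]
        _ = V * (W * (T (m + 2) * (T (m + 3) * (T (m + 2) * T (m + 3))))) := by rw [← hCn3]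
    have rhs : Y * Y
        = V * (W * (T (m + 2) * (T (m + 3) * (T (m + 2) * T (m + 3))))) := by
      calc Y * Y = Y * (W * (T (m + 2) * T (m + 3))) := by nth_rewrite 2 [hYW]; rfl
        _ = V * (Y * (T (m + 2) * T (m + 3))) := shWg _
        _ = V * (W * (T (m + 2) * (T (m + 3) * (T (m + 2) * T (m + 3))))) := by
            rw [hYW]; simp only [mul_assoc]
    rw [lhs, rhs]
  -- folding lemmas
  have fold1 : T 1 * (Z * T (m + 2)) = Y * T (m + 2) := by rw [← mul_assoc, ← hYZ]
  have fold2 : T 1 * (Z * (T 1 * Z)) = Y * Y := by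
    rw [← hYZ, ← mul_assoc, ← hYZ]
  have hcore : Z * (T 1 * (Z * T (m + 2))) = Y * Y := by rw [fold1, hZY]
  have hXfull : X = T 0 * (T 1 * Z) := by rw [hXY, hYZ]
  -- the two expansions
  have hE1 : T 1 * (X * X) = T 0 * (T 1 * (T 0 * (Y * Y))) := by
    calc T 1 * (X * X)
        = T 1 * (T 0 * (T 1 * (Z * (T 0 * (T 1 * Z))))) := by
          rw [hXfull]; simp only [mul_assoc]
      _ = T 1 * (T 0 * (T 1 * (T 0 * (Z * (T 1 * Z))))) := by rw [c0Zg]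
      _ = T 0 * (T 1 * (T 0 * (T 1 * (Z * (T 1 * Z))))) := by rw [hC0g]
      _ = T 0 * (T 1 * (T 0 * (Y * Y))) := by rw [fold2]
  have hE2 : X * X * T (m + 2) = T 0 * (T 1 * (T 0 * (Y * Y))) := by
    calc X * X * T (m + 2)
        = T 0 * (T 1 * (Z * (T 0 * (T 1 * (Z * T (m + 2)))))) := by
          rw [hXfull]; simp only [mul_assoc]
      _ = T 0 * (T 1 * (T 0 * (Z * (T 1 * (Z * T (m + 2)))))) := by rw [c0Zg]
      _ = T 0 * (T 1 * (T 0 * (Y * Y))) := by rw [hcore]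
  have hkey : T 1 * (X * X) = X * X * T (m + 2) := hE1.trans hE2.symm
  -- part 1
  have goal1 : X⁻¹ * T 1 * X = X * T (m + 2) * X⁻¹ := by
    calc X⁻¹ * T 1 * X = X⁻¹ * (T 1 * (X * X)) * X⁻¹ := by group
      _ = X⁻¹ * (X * X * T (m + 2)) * X⁻¹ := by rw [hkey]
      _ = X * T (m + 2) * X⁻¹ := by group
  refine ⟨goal1, ?_, ?_⟩
  · -- part 2
    rw [goal1]
    have braid2 : T (m + 1) * T (m + 2) * T (m + 1) = T (m + 2) * T (m + 1) * T (m + 2) :=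
      hbraid (m + 1) (by omega) (by omega)
    have sh2' : X * T (m + 1) * X⁻¹ = T (m + 2) := by rw [sh2]; group
    have h2b := conj_braid X (T (m + 2)) (T (m + 1)) braid2.symm
    rw [sh2'] at h2b
    exact h2b
  · -- part 3
    have braid1 : T 1 * T 2 * T 1 = T 2 * T 1 * T 2 := hbraid 1 le_rfl (by omega)
    have h3b := conj_braid X⁻¹ (T 1) (T 2) braid1
    rw [inv_inv] at h3b
    have sh1' : X⁻¹ * T 2 * X = T 1 := by rw [mul_assoc, ← sh1]; group
    rw [sh1'] at h3b
    exact h3b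
end

section
/- The element T̃_0 := T_{-1} T_0 satisfies the C-type relation T̃_0 T_1 T̃_0 T_1 = T_1 T̃_0 T_1 T̃_0. -/
/-- In the affine braid group of type `B⁽¹⁾`, the element `T̃_0 = T_{-1} T_0` satisfies the
`C`-type four-term braid relation with `T_1`. Here `Tm1`, `T0`, `T1` play the roles of
`T_{-1}`, `T_0`, `T_1`. -/
theorem Ttilde0_C_relation {G : Type*} [Group G] (Tm1 T0 T1 : G)
    (h01 : T0 * T1 * T0 = T1 * T0 * T1)
    (hm1 : Tm1 * T1 * Tm1 = T1 * Tm1 * T1)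
    (hm0 : Tm1 * T0 = T0 * Tm1) :
    (Tm1 * T0) * T1 * (Tm1 * T0) * T1 = T1 * (Tm1 * T0) * T1 * (Tm1 * T0) := by
  have H01 : ∀ x : G, T0 * (T1 * (T0 * x)) = T1 * (T0 * (T1 * x)) := fun x => by
    simp only [← mul_assoc]; rw [h01]
  have Hm1 : ∀ x : G, Tm1 * (T1 * (Tm1 * x)) = T1 * (Tm1 * (T1 * x)) := fun x => by
    simp only [← mul_assoc]; rw [hm1]
  have Hm0 : ∀ x : G, Tm1 * (T0 * x) = T0 * (Tm1 * x) := fun x => by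
    simp only [← mul_assoc]; rw [hm0]
  calc Tm1 * T0 * T1 * (Tm1 * T0) * T1
      = Tm1 * (T0 * (T1 * (Tm1 * (T0 * T1)))) := by simp only [mul_assoc]
    _ = Tm1 * (T0 * (T1 * (T0 * (Tm1 * T1)))) := by rw [Hm0 T1]
    _ = Tm1 * (T1 * (T0 * (T1 * (Tm1 * T1)))) := by rw [H01 (Tm1 * T1)]
    _ = Tm1 * (T1 * (T0 * (Tm1 * (T1 * Tm1)))) := by
          rw [show T1 * (Tm1 * T1) = Tm1 * (T1 * Tm1) from by
            simp only [← mul_assoc]; rw [hm1]]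
    _ = Tm1 * (T1 * (Tm1 * (T0 * (T1 * Tm1)))) := by rw [← Hm0 (T1 * Tm1)]
    _ = T1 * (Tm1 * (T1 * (T0 * (T1 * Tm1)))) := by rw [Hm1 (T0 * (T1 * Tm1))]
    _ = T1 * (Tm1 * (T0 * (T1 * (T0 * Tm1)))) := by rw [← H01 Tm1]
    _ = T1 * (Tm1 * (T0 * (T1 * (Tm1 * T0)))) := by rw [← hm0]
    _ = T1 * (Tm1 * T0) * T1 * (Tm1 * T0) := by simp only [mul_assoc]
end

section
/- The element T̃_n := T_n T_{n+1} satisfies the C-type relation T̃_n T_{n-1} T̃_n T_{n-1} = T_{n-1} T̃_n T_{n-1} T̃_n. -/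
/-- In the affine braid group of type `D⁽¹⁾`, the element `T̃_n = T_n T_{n+1}` satisfies the
`C`-type four-term braid relation with `T_{n-1}`. Here `Tnm1`, `Tn`, `Tnp1` play the roles of
`T_{n-1}`, `T_n`, `T_{n+1}`. -/
theorem TtildeN_C_relation {G : Type*} [Group G] (Tnm1 Tn Tnp1 : G)
    (h1 : Tnm1 * Tn * Tnm1 = Tn * Tnm1 * Tn)
    (h2 : Tnm1 * Tnp1 * Tnm1 = Tnp1 * Tnm1 * Tnp1)
    (h3 : Tn * Tnp1 = Tnp1 * Tn) :
    (Tn * Tnp1) * Tnm1 * (Tn * Tnp1) * Tnm1 = Tnm1 * (Tn * Tnp1) * Tnm1 * (Tn * Tnp1) := by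
  have h1' : ∀ x : G, Tnm1 * (Tn * (Tnm1 * x)) = Tn * (Tnm1 * (Tn * x)) := by
    intro x
    calc Tnm1 * (Tn * (Tnm1 * x)) = (Tnm1 * Tn * Tnm1) * x := by group
    _ = (Tn * Tnm1 * Tn) * x := by rw [h1]
    _ = Tn * (Tnm1 * (Tn * x)) := by group
  have h2' : ∀ x : G, Tnm1 * (Tnp1 * (Tnm1 * x)) = Tnp1 * (Tnm1 * (Tnp1 * x)) := by
    intro x
    calc Tnm1 * (Tnp1 * (Tnm1 * x)) = (Tnm1 * Tnp1 * Tnm1) * x := by group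
    _ = (Tnp1 * Tnm1 * Tnp1) * x := by rw [h2]
    _ = Tnp1 * (Tnm1 * (Tnp1 * x)) := by group
  have h3' : ∀ x : G, Tn * (Tnp1 * x) = Tnp1 * (Tn * x) := by
    intro x; rw [← mul_assoc, h3, mul_assoc]
  simp only [mul_assoc]
  calc Tn * (Tnp1 * (Tnm1 * (Tn * (Tnp1 * Tnm1))))
      = Tn * (Tnp1 * (Tnm1 * (Tnp1 * (Tn * Tnm1)))) := by
        rw [show Tn * (Tnp1 * Tnm1) = Tnp1 * (Tn * Tnm1) from h3' _]
    _ = Tn * (Tnm1 * (Tnp1 * (Tnm1 * (Tn * Tnm1)))) := by rw [h2']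
    _ = Tn * (Tnm1 * (Tnp1 * (Tn * (Tnm1 * Tn)))) := by
        rw [show Tnm1 * (Tn * Tnm1) = Tn * (Tnm1 * Tn) by
          simpa [mul_assoc] using h1]
    _ = Tn * (Tnm1 * (Tn * (Tnp1 * (Tnm1 * Tn)))) := by rw [h3']
    _ = Tnm1 * (Tn * (Tnm1 * (Tnp1 * (Tnm1 * Tn)))) := by rw [h1']
    _ = Tnm1 * (Tn * (Tnp1 * (Tnm1 * (Tnp1 * Tn)))) := by rw [h2']
    _ = Tnm1 * (Tn * (Tnp1 * (Tnm1 * (Tn * Tnp1)))) := by rw [h3]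
end

section
/- The elements J̄'_k := (T'_{k-1} T'_{k-2} ⋯ T'_1) · X̄ · (T'^{-1}_{n-1} T'^{-1}_{n-2} ⋯ T'^{-1}_k) for k = 1, …, n (so J̄'_1 = X̄ T'^{-1}_{n-1} ⋯ T'^{-1}_1 and J̄'_n = T'_{n-1} ⋯ T'_1 X̄) pairwise commute: J̄'_k J̄'_r = J̄'_r J̄'_k for all 1 ≤ k, r ≤ n. -/
namespace JMaux
variable {G : Type*} [Group G]

lemma downProd_nil (T : ℕ → G) {b a : ℕ} (h : b < a) : downProd T b a = 1 := by
  unfold downProd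
  have : b + 1 - a = 0 := by omega
  simp [this]

lemma downProd_single (T : ℕ → G) (a : ℕ) : downProd T a a = T a := by
  unfold downProd
  have : a + 1 - a = 1 := by omega
  rw [this, List.range_succ]
  simp

lemma downProd_cons (T : ℕ → G) {b a : ℕ} (ha : 1 ≤ a) (h : a ≤ b) :
    downProd T b a = T b * downProd T (b - 1) a := by
  unfold downProd
  have h1 : b + 1 - a = (b - 1 + 1 - a) + 1 := by omega
  rw [h1, List.range_succ_eq_map, List.map_cons, List.prod_cons, List.map_map]
  have h2 : ((fun k => T (b - k)) ∘ Nat.succ) = fun k => T (b - 1 - k) := by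
    funext k
    simp only [Function.comp]
    congr 1
    omega
  rw [h2, Nat.sub_zero]

lemma downProd_snoc (T : ℕ → G) {b a : ℕ} (h : a ≤ b) :
    downProd T b a = downProd T b (a + 1) * T a := by
  unfold downProd
  have h1 : b + 1 - a = (b + 1 - (a + 1)) + 1 := by omega
  rw [h1, List.range_succ, List.map_append, List.prod_append]
  simp only [List.map_cons, List.map_nil, List.prod_cons, List.prod_nil, mul_one]
  congr 2
  omega

lemma commute_downProd (T : ℕ → G) (g : G) {b a : ℕ}
    (h : ∀ i, a ≤ i → i ≤ b → Commute g (T i)) : Commute g (downProd T b a) := by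
  unfold downProd
  apply Commute.list_prod_right
  intro x hx
  simp only [List.mem_map, List.mem_range] at hx
  obtain ⟨k, hk, rfl⟩ := hx
  exact h _ (by omega) (by omega)

lemma downProd_split (T : ℕ → G) {a b : ℕ} (ha : 1 ≤ a) :
    ∀ c, a ≤ c → c ≤ b + 1 → downProd T b a = downProd T b c * downProd T (c - 1) a := by
  intro c hac
  induction c, hac using Nat.le_induction with
  | base =>
    intro _
    rw [downProd_nil T (show a - 1 < a by omega), mul_one]
  | succ c hc ih =>
    intro hcb
    rw [ih (by omega), downProd_snoc T (show c ≤ b by omega), mul_assoc,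
      ← downProd_cons T ha hc]
    norm_num



section Braid
variable {G : Type*} [Group G] (n : ℕ) (T : ℕ → G)
  (hbraid : ∀ i, 1 ≤ i → i ≤ n - 2 → T i * T (i + 1) * T i = T (i + 1) * T i * T (i + 1))
  (hcomm : ∀ i j, 1 ≤ i → j ≤ n - 1 → i + 2 ≤ j → T i * T j = T j * T i)

include hbraid hcomm

/-- Sliding a generator through a decreasing product: `(T_b ⋯ T_a) T_i = T_{i-1} (T_b ⋯ T_a)`. -/
lemma downProd_slide {a i b : ℕ} (ha : 1 ≤ a) (hi1 : a + 1 ≤ i) (hib : i ≤ b) (hb : b ≤ n - 1) :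
    downProd T b a * T i = T (i - 1) * downProd T b a := by
  have hsplit : downProd T b a
      = downProd T b (i + 1) * (T i * (T (i - 1) * downProd T (i - 2) a)) := by
    rw [downProd_split T ha (i + 1) (by omega) (by omega)]
    have h1 : i + 1 - 1 = i := by omega
    rw [h1, downProd_cons T ha (by omega), downProd_cons T ha (by omega)]
    have h2 : i - 1 - 1 = i - 2 := by omega
    rw [h2]
  have hc1 : Commute (T i) (downProd T (i - 2) a) :=
    commute_downProd T (T i) (fun j hja hj => (hcomm j i (by omega) (by omega) (by omega)).symm)
  have hc2 : Commute (T (i - 1)) (downProd T b (i + 1)) :=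
    commute_downProd T (T (i - 1))
      (fun j hja hj => hcomm (i - 1) j (by omega) (by omega) (by omega))
  have hb3 : T i * T (i - 1) * T i = T (i - 1) * T i * T (i - 1) := by
    have h := hbraid (i - 1) (by omega) (by omega)
    have h1 : i - 1 + 1 = i := by omega
    rw [h1] at h
    exact h.symm
  rw [hsplit]
  simp only [mul_assoc]
  rw [← hc1.eq]
  have key : T i * (T (i - 1) * (T i * downProd T (i - 2) a))
      = T (i - 1) * (T i * (T (i - 1) * downProd T (i - 2) a)) := by
    simp only [← mul_assoc]
    rw [hb3]
  rw [key, ← mul_assoc, ← hc2.eq, mul_assoc]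

/-- The front identity: `(T_b ⋯ T_a)(T_b ⋯ T_{a+1}) = (T_{b-1} ⋯ T_a)(T_b ⋯ T_a)`. -/
lemma downProd_front : ∀ d a, 1 ≤ a → a + d ≤ n - 1 →
    downProd T (a + d) a * downProd T (a + d) (a + 1)
      = downProd T (a + d - 1) a * downProd T (a + d) a := by
  intro d
  induction d with
  | zero =>
    intro a ha hd
    simp only [Nat.add_zero]
    rw [downProd_single, downProd_nil T (show a < a + 1 by omega),
      downProd_nil T (show a - 1 < a by omega), mul_one, one_mul]
  | succ d ih =>
    intro a ha hd
    set b := a + (d + 1) with hbdef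
    have hab : a + 1 ≤ b := by omega
    have hstep1 : T a * downProd T b (a + 1)
        = downProd T b (a + 2) * (T a * T (a + 1)) := by
      rw [downProd_snoc T (show a + 1 ≤ b by omega)]
      have hc : Commute (T a) (downProd T b (a + 2)) :=
        commute_downProd T (T a) (fun j hja hj => hcomm a j ha (by omega) (by omega))
      rw [← mul_assoc, hc.eq, mul_assoc]
    have hIH : downProd T b (a + 1) * downProd T b (a + 2)
        = downProd T (b - 1) (a + 1) * downProd T b (a + 1) := by
      have := ih (a + 1) (by omega) (by omega)
      have he : a + 1 + d = b := by omega
      rw [he] at this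
      exact this
    have hbr : T (a + 1) * T a * T (a + 1) = T a * T (a + 1) * T a := by
      exact (hbraid a ha (by omega)).symm
    calc downProd T b a * downProd T b (a + 1)
        = downProd T b (a + 1) * (T a * downProd T b (a + 1)) := by
          rw [downProd_snoc T (show a ≤ b by omega), mul_assoc]
      _ = downProd T b (a + 1) * (downProd T b (a + 2) * (T a * T (a + 1))) := by rw [hstep1]
      _ = (downProd T b (a + 1) * downProd T b (a + 2)) * (T a * T (a + 1)) := by
          simp only [mul_assoc]
      _ = (downProd T (b - 1) (a + 1) * downProd T b (a + 1)) * (T a * T (a + 1)) := by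
          rw [hIH]
      _ = downProd T (b - 1) (a + 1) * (downProd T b (a + 2) * (T (a + 1) * T a * T (a + 1))) := by
          rw [downProd_snoc T (show a + 1 ≤ b by omega)]
          simp only [mul_assoc]
      _ = downProd T (b - 1) (a + 1) * (downProd T b (a + 2) * (T a * T (a + 1) * T a)) := by
          rw [hbr]
      _ = downProd T (b - 1) (a + 1) * (T a * downProd T b (a + 1) * T a) := by
          rw [hstep1]
          simp only [mul_assoc]
      _ = (downProd T (b - 1) (a + 1) * T a) * (downProd T b (a + 1) * T a) := by
          simp only [mul_assoc]
      _ = downProd T (b - 1) a * downProd T b a := by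
          rw [← downProd_snoc T (show a ≤ b - 1 by omega), ← downProd_snoc T (show a ≤ b by omega)]


variable (X : G) (hX : ∀ i, 1 ≤ i → i ≤ n - 2 → X * T i = T (i + 1) * X)

include hX

omit hbraid hcomm in
lemma shift_up : ∀ ℓ b a, b + 1 - a = ℓ → 1 ≤ a → b ≤ n - 2 →
    X * downProd T b a = downProd T (b + 1) (a + 1) * X := by
  intro ℓ
  induction ℓ with
  | zero =>
    intro b a h ha hb
    rw [downProd_nil T (by omega), downProd_nil T (by omega), one_mul, mul_one]
  | succ ℓ ih =>
    intro b a h ha hb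
    have hab : a ≤ b := by omega
    rw [downProd_cons T ha hab, downProd_cons T (by omega : 1 ≤ a + 1) (by omega : a + 1 ≤ b + 1)]
    simp only [Nat.add_sub_cancel]
    rw [← mul_assoc, hX b (by omega) hb, mul_assoc, ih (b - 1) a (by omega) ha (by omega),
      show b - 1 + 1 = b by omega, ← mul_assoc]

omit hbraid hcomm in
lemma shift_down : ∀ ℓ b a, b + 1 - a = ℓ → 2 ≤ a → b ≤ n - 1 →
    downProd (fun m => (T m)⁻¹) b a * X = X * downProd (fun m => (T m)⁻¹) (b - 1) (a - 1) := by
  intro ℓ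
  induction ℓ with
  | zero =>
    intro b a h ha hb
    rw [downProd_nil _ (by omega), downProd_nil _ (by omega), one_mul, mul_one]
  | succ ℓ ih =>
    intro b a h ha hb
    have hab : a ≤ b := by omega
    have key : (T a)⁻¹ * X = X * (T (a - 1))⁻¹ := by
      have e := hX (a - 1) (by omega) (by omega)
      rw [show a - 1 + 1 = a by omega] at e
      have := congrArg (fun g => (T a)⁻¹ * g * (T (a - 1))⁻¹) e
      simpa [mul_assoc] using this
    rw [downProd_snoc _ hab, downProd_snoc _ (show a - 1 ≤ b - 1 by omega)]
    rw [show a - 1 + 1 = a by omega]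
    rw [mul_assoc]
    rw [key, ← mul_assoc, ih b (a + 1) (by omega) (by omega) hb, show a + 1 - 1 = a from rfl,
      mul_assoc]

end Braid
section Main
variable {G : Type*} [Group G] (n : ℕ) (T : ℕ → G) (X : G)
  (hbraid : ∀ i, 1 ≤ i → i ≤ n - 2 → T i * T (i + 1) * T i = T (i + 1) * T i * T (i + 1))
  (hcomm : ∀ i j, 1 ≤ i → j ≤ n - 1 → i + 2 ≤ j → T i * T j = T j * T i)
  (hX : ∀ i, 1 ≤ i → i ≤ n - 2 → X * T i = T (i + 1) * X)
  (hX2 : T 1 * X ^ 2 = X ^ 2 * T (n - 1))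

include hbraid hcomm

omit hcomm in
lemma hbraidS : ∀ i, 1 ≤ i → i ≤ n - 2 →
    (fun m => (T m)⁻¹) i * (fun m => (T m)⁻¹) (i + 1) * (fun m => (T m)⁻¹) i
      = (fun m => (T m)⁻¹) (i + 1) * (fun m => (T m)⁻¹) i * (fun m => (T m)⁻¹) (i + 1) := by
  intro i h1 h2
  have h := congrArg (·⁻¹) (hbraid i h1 h2)
  simpa [mul_inv_rev, mul_assoc] using h

omit hbraid in
lemma hcommS : ∀ i j, 1 ≤ i → j ≤ n - 1 → i + 2 ≤ j →
    (fun m => (T m)⁻¹) i * (fun m => (T m)⁻¹) j = (fun m => (T m)⁻¹) j * (fun m => (T m)⁻¹) i := by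
  intro i j h1 h2 h3
  have h : Commute (T i) (T j) := hcomm i j h1 h2 h3
  exact h.inv_inv

include hX

/-- `T_i` commutes with `J_k` for `k + 1 ≤ i ≤ n - 1`. -/
lemma Tcomm {k i : ℕ} (hk : 1 ≤ k) (hik : k + 1 ≤ i) (hin : i ≤ n - 1) :
    T i * (downProd T (k - 1) 1 * X * downProd (fun m => (T m)⁻¹) (n - 1) k)
      = (downProd T (k - 1) 1 * X * downProd (fun m => (T m)⁻¹) (n - 1) k) * T i := by
  set S : ℕ → G := fun m => (T m)⁻¹ with hS
  have c1 : T i * downProd T (k - 1) 1 = downProd T (k - 1) 1 * T i :=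
    (commute_downProd T (T i)
      (fun j hj1 hj2 => (hcomm j i (by omega) (by omega) (by omega)).symm)).eq
  have c2 : T i * X = X * T (i - 1) := by
    have e := hX (i - 1) (by omega) (by omega)
    rw [show i - 1 + 1 = i by omega] at e
    exact e.symm
  have c3 : T (i - 1) * downProd S (n - 1) k = downProd S (n - 1) k * T i := by
    have h := downProd_slide n S (hbraidS n T hbraid) (hcommS n T hcomm)
      (show 1 ≤ k from hk) (show k + 1 ≤ i from hik) (show i ≤ n - 1 from hin) (le_refl (n - 1))
    -- h : downProd S (n-1) k * S i = S (i-1) * downProd S (n-1) k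
    have h2 := congrArg (fun g => T (i - 1) * g * T i) h
    simp only [hS] at h2
    simpa [mul_assoc] using h2
  simp only [mul_assoc]
  rw [← mul_assoc (T i), c1, mul_assoc, ← mul_assoc (T i) X, c2, mul_assoc X, c3]

omit hbraid hcomm hX in
/-- `J_r = T_{r-1} J_{r-1} T_{r-1}`. -/
lemma Jstep {r : ℕ} (hr : 2 ≤ r) (hrn : r ≤ n) :
    T (r - 1) * (downProd T (r - 1 - 1) 1 * X * downProd (fun m => (T m)⁻¹) (n - 1) (r - 1))
        * T (r - 1)
      = downProd T (r - 1) 1 * X * downProd (fun m => (T m)⁻¹) (n - 1) r := by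
  have h1 : downProd T (r - 1) 1 = T (r - 1) * downProd T (r - 1 - 1) 1 :=
    downProd_cons T (le_refl 1) (by omega)
  have h2 : downProd (fun m => (T m)⁻¹) (n - 1) (r - 1)
      = downProd (fun m => (T m)⁻¹) (n - 1) r * (T (r - 1))⁻¹ := by
    have := downProd_snoc (fun m => (T m)⁻¹) (show r - 1 ≤ n - 1 by omega)
    rwa [show r - 1 + 1 = r by omega] at this
  rw [h1, h2]
  simp [mul_assoc]

include hX2 in
/-- Adjacent commutation `J_k J_{k+1} = J_{k+1} J_k`. -/
lemma Jadj {k : ℕ} (hn3 : 3 ≤ n) (hk : 1 ≤ k) (hkn : k ≤ n - 1) :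
    (downProd T (k - 1) 1 * X * downProd (fun m => (T m)⁻¹) (n - 1) k) *
      (downProd T k 1 * X * downProd (fun m => (T m)⁻¹) (n - 1) (k + 1))
    = (downProd T k 1 * X * downProd (fun m => (T m)⁻¹) (n - 1) (k + 1)) *
      (downProd T (k - 1) 1 * X * downProd (fun m => (T m)⁻¹) (n - 1) k) := by
  set S : ℕ → G := fun m => (T m)⁻¹ with hS
  have hbS := hbraidS n T hbraid
  have hcS := hcommS n T hcomm
  set A1 := downProd T (k - 1) 1 with hA1
  set B1 := downProd T k 1 with hB1
  set U2 := downProd T k 2 with hU2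
  set V1 := downProd S (n - 1) k with hV1
  set V2 := downProd S (n - 1) (k + 1) with hV2
  set W := downProd S (n - 2) k with hW
  have hc : Commute V2 A1 := by
    apply commute_downProd T V2
    intro j hj1 hj2
    refine (commute_downProd S (T j) (fun i hi1 hi2 => ?_)).symm
    have h0 : Commute (T j) (T i) := hcomm j i (by omega) (by omega) (by omega)
    exact h0.inv_right
  have pA : V1 * B1 = A1 * V2 := by
    rw [hV1, hB1, downProd_snoc S (show k ≤ n - 1 from hkn),
      downProd_cons T (le_refl 1) (show 1 ≤ k from hk)]
    simp only [hS, mul_assoc, inv_mul_cancel_left]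
    exact hc.eq
  have pXU : X * A1 = U2 * X := by
    have := shift_up n T X hX (k - 1 + 1 - 1) (k - 1) 1 rfl (le_refl 1) (by omega)
    rwa [show k - 1 + 1 = k by omega] at this
  have pVX : V2 * X = X * W := by
    have := shift_down n T X hX (n - 1 + 1 - (k + 1)) (n - 1) (k + 1) rfl (by omega) (le_refl _)
    rwa [show n - 1 - 1 = n - 2 by omega, show k + 1 - 1 = k from rfl] at this
  have pFrontT : B1 * U2 = A1 * B1 := by
    have := downProd_front n T hbraid hcomm (k - 1) 1 (le_refl 1) (by omega)
    rwa [show 1 + (k - 1) = k by omega] at this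
  have pFrontS : V1 * V2 = W * V1 := by
    have := downProd_front n S hbS hcS (n - 1 - k) k hk (by omega)
    rwa [show k + (n - 1 - k) = n - 1 by omega, show n - 1 - 1 = n - 2 by omega] at this
  have pConsS : V1 = S (n - 1) * W := by
    have := downProd_cons S hk (show k ≤ n - 1 from hkn)
    rwa [show n - 1 - 1 = n - 2 by omega] at this
  have pUsnoc : B1 = U2 * T 1 := downProd_snoc T (show 1 ≤ k from hk)
  have pT1X : T 1 * (X * X) = (X * X) * T (n - 1) := by
    have h := hX2
    rwa [pow_two] at h
  have pTn1 : T (n - 1) * (W * V1) = W * V2 := by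
    rw [← pFrontS, pConsS]
    simp only [hS, ← mul_assoc, mul_inv_cancel, one_mul]
  calc A1 * X * V1 * (B1 * X * V2)
      = A1 * X * (V1 * B1) * X * V2 := by simp only [mul_assoc]
    _ = A1 * X * (A1 * V2) * X * V2 := by rw [pA]
    _ = A1 * (X * A1) * (V2 * X) * V2 := by simp only [mul_assoc]
    _ = A1 * (U2 * X) * (X * W) * V2 := by rw [pXU, pVX]
    _ = A1 * U2 * (X * X) * (W * V2) := by simp only [mul_assoc]
    _ = A1 * U2 * (X * X) * (T (n - 1) * (W * V1)) := by rw [pTn1]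
    _ = A1 * (U2 * ((X * X) * T (n - 1))) * (W * V1) := by simp only [mul_assoc]
    _ = A1 * (U2 * (T 1 * (X * X))) * (W * V1) := by rw [pT1X]
    _ = (A1 * B1) * (X * X) * (W * V1) := by rw [pUsnoc]; simp only [mul_assoc]
    _ = (B1 * U2) * (X * X) * (W * V1) := by rw [pFrontT]
    _ = B1 * (U2 * X) * (X * W) * V1 := by simp only [mul_assoc]
    _ = B1 * (X * A1) * (V2 * X) * V1 := by rw [pXU, pVX]
    _ = B1 * X * (A1 * V2) * X * V1 := by simp only [mul_assoc]
    _ = B1 * X * (V2 * A1) * X * V1 := by rw [hc.eq]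
    _ = B1 * X * V2 * (A1 * X * V1) := by simp only [mul_assoc]

include hX2 in
lemma Jcomm (hn3 : 3 ≤ n) : ∀ r, r ≤ n → ∀ k, 1 ≤ k → k < r →
    (downProd T (k - 1) 1 * X * downProd (fun m => (T m)⁻¹) (n - 1) k) *
      (downProd T (r - 1) 1 * X * downProd (fun m => (T m)⁻¹) (n - 1) r)
    = (downProd T (r - 1) 1 * X * downProd (fun m => (T m)⁻¹) (n - 1) r) *
      (downProd T (k - 1) 1 * X * downProd (fun m => (T m)⁻¹) (n - 1) k) := by
  intro r
  induction r using Nat.strong_induction_on with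
  | _ r ih =>
    intro hrn k hk hkr
    by_cases hadj : r = k + 1
    · subst hadj
      exact Jadj n T X hbraid hcomm hX hX2 hn3 hk (show k ≤ n - 1 by omega)
    · have hstep := Jstep n T X (show 2 ≤ r by omega) hrn
      have ht := Tcomm n T X hbraid hcomm hX (show 1 ≤ k from hk)
        (show k + 1 ≤ r - 1 by omega) (show r - 1 ≤ n - 1 by omega)
      have hind := ih (r - 1) (by omega) (by omega) k hk (by omega)
      rw [← hstep]
      set Jk := downProd T (k - 1) 1 * X * downProd (fun m => (T m)⁻¹) (n - 1) k with hJk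
      set Jr' := downProd T (r - 1 - 1) 1 * X * downProd (fun m => (T m)⁻¹) (n - 1) (r - 1)
        with hJr'
      set Tr := T (r - 1) with hTr
      calc Jk * (Tr * Jr' * Tr)
          = (Jk * Tr) * (Jr' * Tr) := by simp only [mul_assoc]
        _ = (Tr * Jk) * (Jr' * Tr) := by rw [← ht]
        _ = Tr * ((Jk * Jr') * Tr) := by simp only [mul_assoc]
        _ = Tr * ((Jr' * Jk) * Tr) := by rw [hind]
        _ = (Tr * Jr') * (Jk * Tr) := by simp only [mul_assoc]
        _ = (Tr * Jr') * (Tr * Jk) := by rw [← ht]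
        _ = (Tr * Jr' * Tr) * Jk := by simp only [mul_assoc]

end Main

end JMaux

/-- In the extended periodic `A`-type braid group `B̄_n(A⁽¹⁾)`, the elements
`J̄'_k = (T'_{k-1} ⋯ T'_1) X̄ (T'_{n-1}⁻¹ ⋯ T'_k⁻¹)` pairwise commute. -/
theorem Jbar_prime_commute {G : Type*} [Group G] (n : ℕ) (hn : 3 ≤ n) (T' : ℕ → G) (X : G)
    (hbraid : ∀ i, 1 ≤ i → i ≤ n - 2 →
      T' i * T' (i + 1) * T' i = T' (i + 1) * T' i * T' (i + 1))
    (hcomm : ∀ i j, 1 ≤ i → j ≤ n - 1 → i + 2 ≤ j → T' i * T' j = T' j * T' i)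
    (hX : ∀ i, 1 ≤ i → i ≤ n - 2 → X * T' i = T' (i + 1) * X)
    (hX2 : T' 1 * X ^ 2 = X ^ 2 * T' (n - 1)) :
    ∀ k r, 1 ≤ k → k ≤ n → 1 ≤ r → r ≤ n →
      (downProd T' (k - 1) 1 * X * downProd (fun m => (T' m)⁻¹) (n - 1) k) *
        (downProd T' (r - 1) 1 * X * downProd (fun m => (T' m)⁻¹) (n - 1) r) =
      (downProd T' (r - 1) 1 * X * downProd (fun m => (T' m)⁻¹) (n - 1) r) *
        (downProd T' (k - 1) 1 * X * downProd (fun m => (T' m)⁻¹) (n - 1) k) := by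
  intro k r hk hkn hr hrn
  rcases lt_trichotomy k r with h | h | h
  · exact JMaux.Jcomm n T' X hbraid hcomm hX hX2 hn r hrn k hk h
  · subst h; rfl
  · exact (JMaux.Jcomm n T' X hbraid hcomm hX hX2 hn k hkn r hr h).symm
end

section
/- The element Z := (T_0 T_1 ⋯ T_{n-1}) · (T_0 T_1 ⋯ T_{n-2}) ⋯ (T_0 T_1) · T_0 · U satisfies: Z T_i = T_i Z for all 1 ≤ i ≤ n-1; Z X = X Z, where X := T_0 T_1 ⋯ T_n; and Z² = J_1 J_2 ⋯ J_n · U², where J_i := (T_{i-1}^{-1} ⋯ T_1^{-1})(T_0 T_1 ⋯ T_n)(T_{n-1} ⋯ T_i). -/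
/-- The element `Z = (T_0 ⋯ T_{n-1})(T_0 ⋯ T_{n-2}) ⋯ (T_0 T_1) T_0 U`. -/
def Zelt {G : Type*} [Monoid G] (T : ℕ → G) (U : G) (n : ℕ) : G :=
  ((List.range n).map fun m => upProd T 0 (n - 1 - m)).prod * U

/-- The element `J_i = (T_{i-1}⁻¹ ⋯ T_1⁻¹)(T_0 T_1 ⋯ T_n)(T_{n-1} ⋯ T_i)`. -/
def Jelt {G : Type*} [Group G] (T : ℕ → G) (n i : ℕ) : G :=
  downProd (fun k => (T k)⁻¹) (i - 1) 1 * upProd T 0 n * downProd T (n - 1) i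

namespace ZAux

variable {G : Type*} [Monoid G] (T : ℕ → G)

lemma upProd_self (a : ℕ) : upProd T a a = T a := by
  have : List.range 1 = [0] := rfl
  simp [upProd, this]

lemma upProd_succ {a b : ℕ} (h : a ≤ b + 1) : upProd T a (b + 1) = upProd T a b * T (b + 1) := by
  have h1 : b + 1 + 1 - a = (b + 1 - a) + 1 := by omega
  rw [upProd, h1, List.range_succ]
  have h2 : a + (b + 1 - a) = b + 1 := by omega
  simp [upProd, h2]

lemma up_split {a b c : ℕ} (h1 : a ≤ c + 1) (h2 : c ≤ b) :
    upProd T a b = upProd T a c * upProd T (c + 1) b := by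
  have hl : b + 1 - a = (c + 1 - a) + (b + 1 - (c + 1)) := by omega
  rw [upProd, hl, List.range_add, List.map_append, List.prod_append]
  congr 1
  rw [upProd]
  congr 1
  rw [List.map_map]
  apply List.map_congr_left
  intro k hk
  simp only [Function.comp]
  congr 1
  omega

lemma downProd_self (a : ℕ) : downProd T a a = T a := by
  have : List.range 1 = [0] := rfl
  simp [downProd, this]

lemma downProd_cons {a b : ℕ} (h : a ≤ b + 1) :
    downProd T (b + 1) a = T (b + 1) * downProd T b a := by
  have h1 : b + 1 + 1 - a = (b + 1 - a) + 1 := by omega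
  rw [downProd, h1, List.range_succ_eq_map, List.map_cons, List.prod_cons, List.map_map]
  congr 1
  rw [downProd]
  apply congrArg List.prod
  apply List.map_congr_left
  intro k _
  show T (b + 1 - (k + 1)) = T (b - k)
  congr 1
  omega

lemma downProd_succ {a b : ℕ} (h : a ≤ b) :
    downProd T b a = downProd T b (a + 1) * T a := by
  have h1 : b + 1 - a = (b + 1 - (a + 1)) + 1 := by omega
  rw [downProd, h1, List.range_succ]
  have h2 : b - (b - a) = a := by omega
  have h3 : b + 1 - (a + 1) = b - a := by omega
  simp [downProd, h2, h3]

lemma down_split {a b c : ℕ} (h1 : a ≤ c + 1) (h2 : c ≤ b) :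
    downProd T b a = downProd T b (c + 1) * downProd T c a := by
  have hl : b + 1 - a = (b + 1 - (c + 1)) + (c + 1 - a) := by omega
  rw [downProd, hl, List.range_add, List.map_append, List.prod_append, List.map_map]
  congr 1
  rw [downProd]
  apply congrArg List.prod
  apply List.map_congr_left
  intro k _
  show T (b - (b + 1 - (c + 1) + k)) = T (c - k)
  congr 1
  omega

lemma commute_upProd {g : G} {a b : ℕ} (h : ∀ k, a ≤ k → k ≤ b → Commute g (T k)) :
    Commute g (upProd T a b) := by
  apply Commute.list_prod_right
  intro x hx
  simp only [List.mem_map, List.mem_range] at hx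
  obtain ⟨k, hk, rfl⟩ := hx
  exact h _ (by omega) (by omega)

lemma commute_downProd {g : G} {a b : ℕ} (h : ∀ k, a ≤ k → k ≤ b → Commute g (T k)) :
    Commute g (downProd T b a) := by
  apply Commute.list_prod_right
  intro x hx
  simp only [List.mem_map, List.mem_range] at hx
  obtain ⟨k, hk, rfl⟩ := hx
  exact h _ (by omega) (by omega)

/-- `Pprod T n j = u_{n-1} u_{n-2} ⋯ u_{n-j}` where `u_k = T_0 ⋯ T_k`. -/
def Pprod (T : ℕ → G) (n j : ℕ) : G :=
  ((List.range j).map fun r => upProd T 0 (n - 1 - r)).prod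

lemma Pprod_zero (n : ℕ) : Pprod T n 0 = 1 := rfl

lemma Pprod_succ (n j : ℕ) : Pprod T n (j + 1) = Pprod T n j * upProd T 0 (n - 1 - j) := by
  rw [Pprod, List.range_succ]
  simp [Pprod]

lemma Pprod_cons (n j : ℕ) : Pprod T n (j + 1) = upProd T 0 (n - 1) * Pprod T (n - 1) j := by
  rw [Pprod, List.range_succ_eq_map, List.map_cons, List.prod_cons, List.map_map]
  congr 1
  rw [Pprod]
  apply congrArg List.prod
  apply List.map_congr_left
  intro k _
  show upProd T 0 (n - 1 - (k + 1)) = upProd T 0 (n - 1 - 1 - k)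
  congr 1
  omega

end ZAux

namespace ZAux

section Rel

variable {G : Type*} [Group G]

/-- The relations of the affine braid group of type `C` that do not involve the node `n`. -/
structure CRel (n : ℕ) (T : ℕ → G) : Prop where
  braid : ∀ i, 1 ≤ i → i + 2 ≤ n → T i * T (i + 1) * T i = T (i + 1) * T i * T (i + 1)
  comm : ∀ i j, i ≤ n → j ≤ n → i + 2 ≤ j → T i * T j = T j * T i
  c0 : T 1 * T 0 * T 1 * T 0 = T 0 * T 1 * T 0 * T 1

variable {n : ℕ} {T : ℕ → G}

/-- Semiconjugation rewriting helper, in right-associated form. -/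
lemma scjX {a q r : G} (h : SemiconjBy a q r) (x : G) : a * (q * x) = r * (a * x) := by
  rw [← mul_assoc, h.eq, mul_assoc]

lemma commT (R : CRel n T) {i j : ℕ} (hi : i ≤ n) (hj : j ≤ n) (h : i + 2 ≤ j) :
    Commute (T i) (T j) :=
  R.comm i j hi hj h

/-- `T j` commutes with `upProd T a b` when `j` is above the range. -/
lemma commute_T_upProd (R : CRel n T) {j a b : ℕ} (hb : b ≤ n) (hj : j ≤ n) (h : b + 2 ≤ j) :
    Commute (T j) (upProd T a b) :=
  commute_upProd T fun k _ hk2 => (commT R (by omega) hj (by omega)).symm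

lemma commute_T_downProd (R : CRel n T) {j a b : ℕ} (hb : b ≤ n) (hj : j ≤ n) (h : b + 2 ≤ j) :
    Commute (T j) (downProd T b a) :=
  commute_downProd T fun k _ hk2 => (commT R (by omega) hj (by omega)).symm

/-- `T j` commutes with `upProd T a b` when `j` is below the range. -/
lemma commute_T_upProd' (R : CRel n T) {j a b : ℕ} (hb : b ≤ n) (h : j + 2 ≤ a) :
    Commute (T j) (upProd T a b) :=
  commute_upProd T fun k hk1 hk2 => commT R (by omega) (by omega) (by omega)

lemma commute_T_downProd' (R : CRel n T) {j a b : ℕ} (hb : b ≤ n) (h : j + 2 ≤ a) :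
    Commute (T j) (downProd T b a) :=
  commute_downProd T fun k hk1 hk2 => commT R (by omega) (by omega) (by omega)

lemma braidSemi (R : CRel n T) {i : ℕ} (hi : 1 ≤ i) (h : i + 2 ≤ n) :
    SemiconjBy (T i * T (i + 1)) (T i) (T (i + 1)) := by
  show T i * T (i + 1) * T i = T (i + 1) * (T i * T (i + 1))
  rw [R.braid i hi h, mul_assoc]

lemma braidSemi' (R : CRel n T) {i : ℕ} (hi : 1 ≤ i) (h : i + 2 ≤ n) :
    SemiconjBy (T (i + 1) * T i) (T (i + 1)) (T i) := by
  show T (i + 1) * T i * T (i + 1) = T i * (T (i + 1) * T i)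
  rw [← R.braid i hi h, mul_assoc]

/-- Shift lemma: `(T_a ⋯ T_b) T_i = T_{i+1} (T_a ⋯ T_b)` for `a ≤ i < b`. -/
lemma up_shift (R : CRel n T) {a b i : ℕ} (ha : a ≤ i) (h1 : 1 ≤ i) (hb : i + 1 ≤ b)
    (hbn : b ≤ n) (hin : i + 2 ≤ n) :
    SemiconjBy (upProd T a b) (T i) (T (i + 1)) := by
  have h2 : i - 1 + 1 = i := by omega
  have h3 : upProd T (i - 1 + 1) (i + 1) = T i * T (i + 1) := by
    rw [h2, upProd_succ T (show i ≤ i + 1 by omega), upProd_self]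
  have e1 : upProd T a b = upProd T a (i - 1) * ((T i * T (i + 1)) * upProd T (i + 2) b) := by
    rw [up_split T (show a ≤ (i + 1) + 1 by omega) (show i + 1 ≤ b by omega),
      up_split T (show a ≤ (i - 1) + 1 by omega) (show i - 1 ≤ i + 1 by omega),
      h3, mul_assoc]
  rw [e1]
  exact SemiconjBy.mul_left
    ((commute_T_upProd R (show i - 1 ≤ n by omega) (show i + 1 ≤ n by omega) (by omega)).symm)
    (SemiconjBy.mul_left (braidSemi R h1 hin)
      ((commute_T_upProd' R hbn (by omega)).symm))

/-- Shift lemma: `T_i (T_b ⋯ T_a) = (T_b ⋯ T_a) T_{i+1}` for `a ≤ i < b`. -/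
lemma down_shift (R : CRel n T) {a b i : ℕ} (ha : a ≤ i) (h1 : 1 ≤ i) (hb : i + 1 ≤ b)
    (hbn : b ≤ n) (hin : i + 2 ≤ n) :
    SemiconjBy (downProd T b a) (T (i + 1)) (T i) := by
  have h2 : i - 1 + 1 = i := by omega
  have h3 : downProd T (i + 1) (i - 1 + 1) = T (i + 1) * T i := by
    rw [h2, downProd_cons T (show i ≤ i + 1 by omega), downProd_self]
  have e1 : downProd T b a = downProd T b (i + 2) * ((T (i + 1) * T i) * downProd T (i - 1) a) := by
    rw [down_split T (show a ≤ (i + 1) + 1 by omega) (show i + 1 ≤ b by omega),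
      down_split T (show a ≤ (i - 1) + 1 by omega) (show i - 1 ≤ i + 1 by omega),
      h3, mul_assoc]
  rw [e1]
  exact SemiconjBy.mul_left
    ((commute_T_downProd' R hbn (by omega)).symm)
    (SemiconjBy.mul_left (braidSemi' R h1 hin)
      ((commute_T_downProd R (show i - 1 ≤ n by omega) (show i + 1 ≤ n by omega) (by omega)).symm))

/-- Key square identity `u_{m+1}² = T_1 u_{m+1} u_m`, where `u_k = T_0 T_1 ⋯ T_k`. -/
lemma Ksq (R : CRel n T) : ∀ m, m + 2 ≤ n →
    upProd T 0 (m + 1) * upProd T 0 (m + 1) =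
      T 1 * upProd T 0 (m + 1) * upProd T 0 m := by
  intro m
  induction m with
  | zero =>
    intro _
    rw [upProd_succ T (by omega), upProd_self]
    simp only [mul_assoc]
    have h := R.c0.symm
    simp only [mul_assoc] at h
    exact h
  | succ m IH =>
    intro hm
    have IH' := IH (by omega)
    have e1 : upProd T 0 (m + 1 + 1) = upProd T 0 (m + 1) * T (m + 1 + 1) :=
      upProd_succ T (by omega)
    have e2 : upProd T 0 (m + 1) = upProd T 0 m * T (m + 1) := upProd_succ T (by omega)
    have hc : Commute (T (m + 1 + 1)) (upProd T 0 m) :=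
      commute_T_upProd R (by omega) (by omega) (by omega)
    have hbr := R.braid (m + 1) (by omega) (by omega)
    have e3 : T (m + 1 + 1) * upProd T 0 (m + 1) =
        upProd T 0 m * (T (m + 1 + 1) * T (m + 1)) := by
      rw [e2, ← mul_assoc, hc.eq, mul_assoc]
    have e3X : ∀ x : G, T (m + 1 + 1) * (upProd T 0 (m + 1) * x) =
        upProd T 0 m * (T (m + 1 + 1) * (T (m + 1) * x)) := by
      intro x
      rw [← mul_assoc, e3]
      simp only [mul_assoc]
    have braidE' : T (m + 1 + 1) * (T (m + 1) * T (m + 1 + 1)) =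
        T (m + 1) * (T (m + 1 + 1) * T (m + 1)) := by
      rw [← mul_assoc, ← hbr, mul_assoc]
    have e2X : ∀ x : G, upProd T 0 m * (T (m + 1) * x) = upProd T 0 (m + 1) * x := by
      intro x
      rw [← mul_assoc, ← e2]
    have IHX : ∀ x : G, upProd T 0 (m + 1) * (upProd T 0 (m + 1) * x) =
        T 1 * (upProd T 0 (m + 1) * (upProd T 0 m * x)) := by
      intro x
      rw [← mul_assoc, IH']
      simp only [mul_assoc]
    rw [e1]
    simp only [mul_assoc]
    rw [e3X, e3, braidE', e2X, IHX]

/-- `P_j T_i = T_{i+j} P_j` where `P_j = u_{n-1} u_{n-2} ⋯ u_{n-j}`. -/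
lemma Pshift (R : CRel n T) : ∀ j i, 1 ≤ i → i + j + 1 ≤ n →
    SemiconjBy (Pprod T n j) (T i) (T (i + j)) := by
  intro j
  induction j with
  | zero => intro i _ _; rw [Pprod_zero]; exact SemiconjBy.one_left _
  | succ j IH =>
    intro i hi hij
    rw [Pprod_succ]
    have h1 : SemiconjBy (upProd T 0 (n - 1 - j)) (T i) (T (i + 1)) :=
      up_shift R (by omega) hi (by omega) (by omega) (by omega)
    have h2 : SemiconjBy (Pprod T n j) (T (i + 1)) (T (i + 1 + j)) :=
      IH (i + 1) (by omega) (by omega)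
    have h3 := SemiconjBy.mul_left h2 h1
    have he : i + 1 + j = i + (j + 1) := by omega
    rwa [he] at h3

end Rel

end ZAux

namespace ZAux

section Rel2

variable {G : Type*} [Group G] {n : ℕ} {T : ℕ → G}

lemma commute_T_Pprod (R : CRel n T) {j m : ℕ} (k : ℕ) (hm : m ≤ n) (hj : m + 1 ≤ j)
    (hjn : j ≤ n) (hkm : k ≤ m) : Commute (T j) (Pprod T m k) := by
  induction k with
  | zero => rw [Pprod_zero]; exact Commute.one_right _
  | succ k IH =>
    rw [Pprod_succ]
    exact Commute.mul_right (IH (by omega))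
      (commute_T_upProd R (show m - 1 - k ≤ n by omega) hjn (by omega))

/-- `P_{k+1} u_{n-k-1} = T_{k+1} P_{k+1} u_{n-k-2}`. -/
lemma Kp (R : CRel n T) (k : ℕ) (hk : k + 2 ≤ n) :
    Pprod T n (k + 1) * upProd T 0 (n - (k + 1)) =
      T (k + 1) * (Pprod T n (k + 1) * upProd T 0 (n - (k + 1) - 1)) := by
  have a1 : n - (k + 1) = n - 1 - k := by omega
  have a2 : n - (k + 1) - 1 = n - k - 2 := by omega
  have hK := Ksq R (n - k - 2) (by omega)
  have a3 : n - k - 2 + 1 = n - 1 - k := by omega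
  rw [a3] at hK
  have hP : SemiconjBy (Pprod T n k) (T 1) (T (1 + k)) := Pshift R k 1 (by omega) (by omega)
  rw [Pprod_succ, a2, a1]
  simp only [mul_assoc] at hK ⊢
  rw [hK, scjX hP, Nat.add_comm 1 k]

/-- `P_{k+2} T_{n-k-1} = T_{k+1} P_{k+2}`. -/
lemma Hshift (R : CRel n T) (k : ℕ) (hk : k + 2 ≤ n) :
    SemiconjBy (Pprod T n (k + 2)) (T (n - (k + 2) + 1)) (T (k + 1)) := by
  show Pprod T n (k + 2) * T (n - (k + 2) + 1) = T (k + 1) * Pprod T n (k + 2)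
  have e0 : upProd T 0 (n - k - 2 + 1) = upProd T 0 (n - k - 2) * T (n - k - 2 + 1) :=
    upProd_succ T (by omega)
  rw [Pprod_succ (j := k + 1), show n - 1 - (k + 1) = n - k - 2 by omega,
    show n - (k + 2) + 1 = n - k - 2 + 1 by omega]
  simp only [mul_assoc]
  rw [← e0]
  have hKp := Kp R k hk
  rw [show n - (k + 1) = n - k - 2 + 1 by omega,
    show n - k - 2 + 1 - 1 = n - k - 2 by omega] at hKp
  rw [hKp]

/-- Conjugation by the full product `V_m`: `V_m T_j = T_{m-j} V_m`. -/
lemma Ashift (R : CRel n T) : ∀ m, m ≤ n → ∀ j, 1 ≤ j → j + 1 ≤ m →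
    SemiconjBy (Pprod T m m) (T j) (T (m - j)) := by
  intro m
  induction m with
  | zero => intro _ j _ h2; omega
  | succ m IH =>
    intro hm j h1 h2
    have ecn : Pprod T (m + 1) (m + 1) = upProd T 0 m * Pprod T m m := by
      have := Pprod_cons T (m + 1) m
      simpa using this
    by_cases hj : j + 1 ≤ m
    · have hIH : SemiconjBy (Pprod T m m) (T j) (T (m - j)) := IH (by omega) j h1 hj
      have hup : SemiconjBy (upProd T 0 m) (T (m - j)) (T (m - j + 1)) :=
        up_shift R (by omega) (by omega) (by omega) (by omega) (by omega)
      have hcomp := SemiconjBy.mul_left hup hIH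
      rw [← ecn, show m - j + 1 = m + 1 - j by omega] at hcomp
      exact hcomp
    · have hjm : j = m := by omega
      subst hjm
      have hj1 : j - 1 + 1 = j := by omega
      rw [show j + 1 - j = 1 by omega, ecn]
      have ecn2 : Pprod T j j = upProd T 0 (j - 1) * Pprod T (j - 1) (j - 1) := by
        obtain ⟨k, rfl⟩ : ∃ k, j = k + 1 := ⟨j - 1, by omega⟩
        have := Pprod_cons T (k + 1) k
        simpa using this
      rw [ecn2]
      have c1 : Commute (T j) (Pprod T (j - 1) (j - 1)) :=
        commute_T_Pprod R (j - 1) (by omega) (by omega) (by omega) (by omega)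
      have e6 : upProd T 0 j = upProd T 0 (j - 1) * T j := by
        have := upProd_succ T (show (0:ℕ) ≤ (j - 1) + 1 by omega) (a := 0) (b := j - 1)
        rwa [hj1] at this
      have hK := Ksq R (j - 1) (by omega)
      rw [hj1] at hK
      show upProd T 0 j * (upProd T 0 (j - 1) * Pprod T (j - 1) (j - 1)) * T j =
        T 1 * (upProd T 0 j * (upProd T 0 (j - 1) * Pprod T (j - 1) (j - 1)))
      have e5 : ∀ x : G, upProd T 0 (j - 1) * (T j * x) = upProd T 0 j * x := by
        intro x
        rw [← mul_assoc, ← e6]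
      have hKX : ∀ x : G, upProd T 0 j * (upProd T 0 j * x) =
          T 1 * (upProd T 0 j * (upProd T 0 (j - 1) * x)) := by
        intro x
        rw [← mul_assoc, hK]
        simp only [mul_assoc]
      simp only [mul_assoc]
      rw [c1.symm.eq, e5, hKX]

/-- `V_m (T_m T_{m-1} ⋯ T_0) = (T_0 ⋯ T_m) V_m`. -/
lemma Cdown (R : CRel n T) : ∀ m, m ≤ n →
    Pprod T m m * downProd T m 0 = upProd T 0 m * Pprod T m m := by
  intro m
  induction m with
  | zero =>
    intro _
    rw [Pprod_zero, downProd_self, upProd_self, one_mul, mul_one]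
  | succ m IH =>
    intro hm
    have ecn : Pprod T (m + 1) (m + 1) = upProd T 0 m * Pprod T m m := by
      have := Pprod_cons T (m + 1) m
      simpa using this
    have cm : Commute (T (m + 1)) (Pprod T m m) :=
      commute_T_Pprod R m (by omega) (by omega) (by omega) (by omega)
    rw [ecn, downProd_cons T (show (0:ℕ) ≤ m + 1 by omega)]
    simp only [mul_assoc]
    rw [scjX cm.symm, IH (by omega), ← mul_assoc, ← upProd_succ T (show (0:ℕ) ≤ m + 1 by omega)]

end Rel2

end ZAux

namespace ZAux

section Peel

variable {G : Type*} [Monoid G] (T : ℕ → G)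

lemma upProd_succ' {a b : ℕ} (hb : 1 ≤ b) (hab : a ≤ b) :
    upProd T a b = upProd T a (b - 1) * T b := by
  obtain ⟨c, rfl⟩ : ∃ c, b = c + 1 := ⟨b - 1, by omega⟩
  rw [show c + 1 - 1 = c from rfl]
  exact upProd_succ T (by omega)

lemma downProd_cons' {a b : ℕ} (hb : 1 ≤ b) (hab : a ≤ b) :
    downProd T b a = T b * downProd T (b - 1) a := by
  obtain ⟨c, rfl⟩ : ∃ c, b = c + 1 := ⟨b - 1, by omega⟩
  rw [show c + 1 - 1 = c from rfl]
  exact downProd_cons T (by omega)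

lemma Pprod_cons' {m : ℕ} (hm : 1 ≤ m) :
    Pprod T m m = upProd T 0 (m - 1) * Pprod T (m - 1) (m - 1) := by
  obtain ⟨k, rfl⟩ : ∃ k, m = k + 1 := ⟨m - 1, by omega⟩
  have := Pprod_cons T (k + 1) k
  simpa using this

end Peel

section Final

variable {G : Type*} [Group G] {n : ℕ} {T : ℕ → G}

/-- The mirrored generators `i ↦ T (n - i)` satisfy the `CRel` relations. -/
lemma CRel.mirror (R : CRel n T) (hn : 2 ≤ n)
    (hCn : T (n - 1) * T n * T (n - 1) * T n = T n * T (n - 1) * T n * T (n - 1)) :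
    CRel n (fun i => T (n - i)) := by
  refine ⟨?_, ?_, ?_⟩
  · intro i hi hin
    show T (n - i) * T (n - (i + 1)) * T (n - i) = T (n - (i + 1)) * T (n - i) * T (n - (i + 1))
    obtain ⟨j, hj1, hj2⟩ : ∃ j, n - i = j + 1 ∧ n - (i + 1) = j := ⟨n - i - 1, by omega, by omega⟩
    rw [hj1, hj2]
    exact (R.braid j (by omega) (by omega)).symm
  · intro i j hi hj hij
    show T (n - i) * T (n - j) = T (n - j) * T (n - i)
    exact (R.comm (n - j) (n - i) (by omega) (by omega) (by omega)).symm
  · show T (n - 1) * T (n - 0) * T (n - 1) * T (n - 0) =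
      T (n - 0) * T (n - 1) * T (n - 0) * T (n - 1)
    rw [show n - 0 = n from rfl]
    exact hCn

/-- Translation: an up-product of mirrored generators is a down-product. -/
lemma up_mirror (b : ℕ) (hb : b ≤ n) :
    upProd (fun i => T (n - i)) 0 b = downProd T n (n - b) := by
  unfold upProd downProd
  rw [show n + 1 - (n - b) = b + 1 by omega, show b + 1 - 0 = b + 1 from rfl]
  apply congrArg List.prod
  apply List.map_congr_left
  intro k _
  show T (n - (0 + k)) = T (n - k)
  rw [Nat.zero_add]

lemma Jone : Jelt T n 1 = upProd T 0 n * downProd T (n - 1) 1 := by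
  unfold Jelt
  rw [show downProd (fun k => (T k)⁻¹) (1 - 1) 1 = 1 from rfl, one_mul]

lemma Jrec (i : ℕ) (h1 : 1 ≤ i) (h2 : i + 1 ≤ n) :
    Jelt T n (i + 1) = (T i)⁻¹ * (Jelt T n i * (T i)⁻¹) := by
  unfold Jelt
  have hi1 : i + 1 - 1 = i := by omega
  have e1 : downProd (fun k => (T k)⁻¹) i 1 =
      (T i)⁻¹ * downProd (fun k => (T k)⁻¹) (i - 1) 1 :=
    downProd_cons' (fun k => (T k)⁻¹) (by omega) (by omega)
  have e2' : downProd T (n - 1) i = downProd T (n - 1) (i + 1) * T i :=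
    downProd_succ T (by omega)
  have e2 : downProd T (n - 1) (i + 1) = downProd T (n - 1) i * (T i)⁻¹ := by
    rw [e2', mul_assoc, mul_inv_cancel, mul_one]
  rw [hi1, e1, e2]
  simp only [mul_assoc]

/-- `J_k` commutes with `T_j` for `k + 1 ≤ j ≤ n`. -/
lemma Jcomm (R : CRel n T)
    (hCn : T (n - 1) * T n * T (n - 1) * T n = T n * T (n - 1) * T n * T (n - 1))
    {k j : ℕ} (hk : 1 ≤ k) (hkj : k + 1 ≤ j) (hjn : j ≤ n) :
    Commute (T j) (Jelt T n k) := by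
  have c1 : Commute (T j) (downProd (fun l => (T l)⁻¹) (k - 1) 1) :=
    commute_downProd _ fun l hl1 hl2 => ((commT R (by omega) hjn (by omega)).symm).inv_right
  have core : Commute (T j) (upProd T 0 n * downProd T (n - 1) k) := by
    by_cases hjn' : j = n
    · rw [hjn']
      obtain ⟨m, rfl⟩ : ∃ m, n = m + 2 := ⟨n - 2, by omega⟩
      rw [show m + 2 - 1 = m + 1 by omega] at hCn ⊢
      have ex : upProd T 0 (m + 2) = upProd T 0 m * (T (m + 1) * T (m + 2)) := by
        rw [show m + 2 = m + 1 + 1 from rfl, upProd_succ T (by omega), upProd_succ T (by omega)]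
        simp only [mul_assoc]
      have exd : downProd T (m + 1) k = T (m + 1) * downProd T m k :=
        downProd_cons' T (by omega) (by omega)
      have c2 : Commute (T (m + 2)) (upProd T 0 m) :=
        commute_T_upProd R (by omega) (by omega) (by omega)
      have c3 : Commute (T (m + 2)) (downProd T m k) :=
        commute_T_downProd R (by omega) (by omega) (by omega)
      have hCX : ∀ x : G, T (m + 2) * (T (m + 1) * (T (m + 2) * (T (m + 1) * x))) =
          T (m + 1) * (T (m + 2) * (T (m + 1) * (T (m + 2) * x))) := by
        intro x
        simp only [← mul_assoc]
        rw [← hCn]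
      show T (m + 2) * (upProd T 0 (m + 2) * downProd T (m + 1) k) =
        upProd T 0 (m + 2) * downProd T (m + 1) k * T (m + 2)
      rw [ex, exd]
      simp only [mul_assoc]
      rw [scjX c2, hCX, c3.eq]
    · have hj1 : j - 1 + 1 = j := by omega
      have hX : SemiconjBy (upProd T 0 n) (T (j - 1)) (T j) := by
        have := up_shift R (show (0:ℕ) ≤ j - 1 by omega) (by omega) (by omega)
          (le_refl n) (by omega)
        rwa [hj1] at this
      have hD : SemiconjBy (downProd T (n - 1) k) (T j) (T (j - 1)) := by
        have := down_shift R (show k ≤ j - 1 by omega) (by omega)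
          (show (j - 1) + 1 ≤ n - 1 by omega) (by omega) (by omega)
        rwa [hj1] at this
      exact Commute.symm (SemiconjBy.mul_left hX hD)
  have jd : Jelt T n k =
      downProd (fun l => (T l)⁻¹) (k - 1) 1 * (upProd T 0 n * downProd T (n - 1) k) := by
    unfold Jelt
    rw [mul_assoc]
  rw [jd]
  exact Commute.mul_right c1 core

lemma Jcomm_down (R : CRel n T)
    (hCn : T (n - 1) * T n * T (n - 1) * T n = T n * T (n - 1) * T n * T (n - 1))
    {k a : ℕ} (hk : 1 ≤ k) (ha : k + 1 ≤ a) :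
    Commute (Jelt T n k) (downProd T n a) :=
  commute_downProd T fun l hl1 hl2 => (Jcomm R hCn hk (by omega) (by omega)).symm

/-- `F`: the key inductive step for the product of the `J`'s. -/
lemma Feq (R : CRel n T) (R' : CRel n (fun i => T (n - i)))
    (hCn : T (n - 1) * T n * T (n - 1) * T n = T n * T (n - 1) * T n * T (n - 1)) :
    ∀ k, k + 1 ≤ n →
    Pprod (fun i => T (n - i)) n k * Jelt T n (k + 1) =
      upProd T 0 (n - k - 1) * Pprod (fun i => T (n - i)) n (k + 1) := by
  intro k
  induction k with
  | zero =>
    intro hn1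
    simp only [Nat.zero_add, Nat.sub_zero, Pprod_zero, one_mul]
    have p1 : Pprod (fun i => T (n - i)) n 1 = upProd (fun i => T (n - i)) 0 (n - 1) := by
      rw [Pprod_succ, Pprod_zero, one_mul]
      simp only [Nat.sub_zero]
    rw [Jone, p1, up_mirror (n - 1) (by omega), show n - (n - 1) = 1 by omega,
      upProd_succ' T (show 1 ≤ n by omega) (by omega),
      downProd_cons' T (show 1 ≤ n by omega) (by omega)]
    simp only [mul_assoc]
  | succ k IH =>
    intro hk1
    have IH' := IH (by omega)
    rw [Jrec (k + 1) (by omega) (by omega), Pprod_succ (fun i => T (n - i)) n k,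
      up_mirror (n - 1 - k) (by omega), show n - (n - 1 - k) = k + 1 by omega]
    have e7 : downProd T n (k + 1) = downProd T n (k + 1 + 1) * T (k + 1) :=
      downProd_succ T (by omega)
    have e7' : downProd T n (k + 1) * (T (k + 1))⁻¹ = downProd T n (k + 1 + 1) := by
      rw [e7, mul_assoc, mul_inv_cancel, mul_one]
    have e7X : ∀ x : G, downProd T n (k + 1) * ((T (k + 1))⁻¹ * x) =
        downProd T n (k + 1 + 1) * x := by
      intro x
      rw [← mul_assoc, e7']
    have cJD : Commute (Jelt T n (k + 1)) (downProd T n (k + 1 + 1)) :=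
      Jcomm_down R hCn (by omega) (by omega)
    have pp : Pprod (fun i => T (n - i)) n (k + 1) * downProd T n (k + 1 + 1) =
        Pprod (fun i => T (n - i)) n (k + 1 + 1) := by
      rw [Pprod_succ (fun i => T (n - i)) n (k + 1),
        up_mirror (n - 1 - (k + 1)) (by omega), show n - (n - 1 - (k + 1)) = k + 1 + 1 by omega]
    have IHX : ∀ x : G, Pprod (fun i => T (n - i)) n k * (Jelt T n (k + 1) * x) =
        upProd T 0 (n - k - 1) * (Pprod (fun i => T (n - i)) n (k + 1) * x) := by
      intro x
      rw [← mul_assoc, IH', mul_assoc]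
    have ppX : ∀ x : G, Pprod (fun i => T (n - i)) n (k + 1) * (downProd T n (k + 1 + 1) * x) =
        Pprod (fun i => T (n - i)) n (k + 1 + 1) * x := by
      intro x
      rw [← mul_assoc, pp]
    have hH0 := Hshift R' k (by omega)
    rw [show k + 2 = k + 1 + 1 from rfl] at hH0
    rw [show n - (n - (k + 1 + 1) + 1) = k + 1 by omega,
      show n - (k + 1) = n - k - 1 by omega] at hH0
    have hHinv := hH0.inv_right
    have ust : upProd T 0 (n - k - 1) * (T (n - k - 1))⁻¹ = upProd T 0 (n - (k + 1) - 1) := by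
      rw [upProd_succ' T (show 1 ≤ n - k - 1 by omega) (by omega), mul_assoc,
        mul_inv_cancel, mul_one, show n - k - 1 - 1 = n - (k + 1) - 1 by omega]
    simp only [mul_assoc]
    rw [e7X, scjX cJD.symm, IHX, ppX, hHinv.eq, ← mul_assoc, ust]

/-- `E`: the product of the `J`'s equals `V · V'`. -/
lemma Eeq (R : CRel n T) (R' : CRel n (fun i => T (n - i)))
    (hCn : T (n - 1) * T n * T (n - 1) * T n = T n * T (n - 1) * T n * T (n - 1)) :
    ∀ k, k ≤ n →
    ((List.range k).map fun m => Jelt T n (m + 1)).prod =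
      Pprod T n k * Pprod (fun i => T (n - i)) n k := by
  intro k
  induction k with
  | zero => intro _; simp [Pprod_zero]
  | succ k IH =>
    intro hk
    rw [List.range_succ, List.map_append, List.prod_append]
    simp only [List.map_cons, List.map_nil, List.prod_cons, List.prod_nil, mul_one]
    rw [IH (by omega), mul_assoc, Feq R R' hCn k (by omega), ← mul_assoc,
      show n - k - 1 = n - 1 - k by omega, ← Pprod_succ T n k]
  -- note: need the up-factor index to match Pprod_succ's `n - 1 - k`

end Final

end ZAux

namespace ZAux

section Ulem

variable {G : Type*} [Group G] {n : ℕ} {T : ℕ → G} {U : G}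

lemma Uup (hU' : ∀ i, i ≤ n → U * T i = T (n - i) * U) :
    ∀ k, k ≤ n → U * upProd T 0 k = downProd T n (n - k) * U := by
  intro k
  induction k with
  | zero =>
    intro _
    simp only [Nat.sub_zero]
    rw [upProd_self, downProd_self]
    have := hU' 0 (by omega)
    simpa using this
  | succ k IH =>
    intro hk
    have ds : downProd T n (n - (k + 1)) = downProd T n (n - k) * T (n - (k + 1)) := by
      have := downProd_succ T (a := n - (k + 1)) (b := n) (by omega)
      rwa [show n - (k + 1) + 1 = n - k by omega] at this
    rw [upProd_succ T (by omega), ds, ← mul_assoc, IH (by omega), mul_assoc,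
      hU' (k + 1) (by omega), ← mul_assoc]

lemma UPprod (hU' : ∀ i, i ≤ n → U * T i = T (n - i) * U) :
    ∀ j, j ≤ n → U * Pprod T n j = Pprod (fun i => T (n - i)) n j * U := by
  intro j
  induction j with
  | zero =>
    intro _
    rw [Pprod_zero, Pprod_zero, one_mul, mul_one]
  | succ j IH =>
    intro hj
    rw [Pprod_succ T n j, Pprod_succ (fun i => T (n - i)) n j, ← mul_assoc, IH (by omega),
      mul_assoc, Uup hU' (n - 1 - j) (by omega), up_mirror (n - 1 - j) (by omega), ← mul_assoc]

end Ulem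

end ZAux


/-- In the extended affine braid group `B̂(C_n⁽¹⁾)`, the element `Z` commutes with
`T_1, …, T_{n-1}` and with `X = T_0 ⋯ T_n`, and `Z² = J_1 ⋯ J_n · U²`. -/
theorem Z_properties {G : Type*} [Group G] (n : ℕ) (hn : 2 ≤ n) (T : ℕ → G) (U : G)
    (hbraid : ∀ i, 1 ≤ i → i ≤ n - 2 →
      T i * T (i + 1) * T i = T (i + 1) * T i * T (i + 1))
    (hcomm : ∀ i j, i ≤ n → j ≤ n → i + 2 ≤ j → T i * T j = T j * T i)
    (hC0 : T 1 * T 0 * T 1 * T 0 = T 0 * T 1 * T 0 * T 1)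
    (hCn : T (n - 1) * T n * T (n - 1) * T n = T n * T (n - 1) * T n * T (n - 1))
    (hU : ∀ i, i ≤ n → U * T i * U⁻¹ = T (n - i)) :
    (∀ i, 1 ≤ i → i ≤ n - 1 → Zelt T U n * T i = T i * Zelt T U n) ∧
    Zelt T U n * upProd T 0 n = upProd T 0 n * Zelt T U n ∧
    Zelt T U n * Zelt T U n =
      ((List.range n).map fun m => Jelt T n (m + 1)).prod * (U * U) := by
  have R : ZAux.CRel n T := ⟨fun i h1 h2 => hbraid i h1 (by omega), hcomm, hC0⟩
  have R' : ZAux.CRel n (fun i => T (n - i)) := ZAux.CRel.mirror R hn hCn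
  have hU' : ∀ i, i ≤ n → U * T i = T (n - i) * U := by
    intro i hi
    have h := hU i hi
    calc U * T i = U * T i * U⁻¹ * U := by group
      _ = T (n - i) * U := by rw [h]
  have hZ : Zelt T U n = ZAux.Pprod T n n * U := rfl
  have EQC : ZAux.Pprod T n n * downProd T n 0 = upProd T 0 n * ZAux.Pprod T n n := by
    have ecn := ZAux.Pprod_cons' T (show 1 ≤ n by omega)
    have dn : downProd T n 0 = T n * downProd T (n - 1) 0 :=
      ZAux.downProd_cons' T (by omega) (by omega)
    have cm : Commute (T n) (ZAux.Pprod T (n - 1) (n - 1)) :=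
      ZAux.commute_T_Pprod R (n - 1) (by omega) (by omega) (by omega) (by omega)
    have hc := ZAux.Cdown R (n - 1) (by omega)
    have e6 : upProd T 0 n = upProd T 0 (n - 1) * T n :=
      ZAux.upProd_succ' T (by omega) (by omega)
    rw [ecn, dn, e6]
    simp only [mul_assoc]
    rw [ZAux.scjX cm.symm, hc]
  refine ⟨?_, ?_, ?_⟩
  · intro i h1 h2
    have hA := ZAux.Ashift R n le_rfl (n - i) (by omega) (by omega)
    rw [show n - (n - i) = i by omega] at hA
    rw [hZ, mul_assoc, hU' i (by omega), ← mul_assoc, hA.eq, mul_assoc]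
  · have hM := ZAux.Uup hU' n le_rfl
    rw [show n - n = 0 by omega] at hM
    rw [hZ, mul_assoc, hM, ← mul_assoc, EQC, mul_assoc]
  · have hUP := ZAux.UPprod hU' n le_rfl
    have hE := ZAux.Eeq R R' hCn n le_rfl
    rw [hZ, hE]
    calc ZAux.Pprod T n n * U * (ZAux.Pprod T n n * U)
        = ZAux.Pprod T n n * (U * ZAux.Pprod T n n) * U := by simp only [mul_assoc]
      _ = ZAux.Pprod T n n * (ZAux.Pprod (fun i => T (n - i)) n n * U) * U := by rw [hUP]
      _ = ZAux.Pprod T n n * ZAux.Pprod (fun i => T (n - i)) n n * (U * U) := by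
          simp only [mul_assoc]
end

section
/- The elements 𝖩_i := (T_{i-1}^{-1} ⋯ T_1^{-1} · T_0 · T_1 ⋯ T_{i-1}) · (T_i T_{i+1} ⋯ T_{n-1} · T_{n-1} ⋯ T_{i+1} T_i) for i = 1, …, n (the second factor being the identity when i = n) pairwise commute: 𝖩_i 𝖩_j = 𝖩_j 𝖩_i for all 1 ≤ i, j ≤ n. -/
namespace SfJAux

variable {G : Type*} [Monoid G]

lemma upProd_nil (T : ℕ → G) {a b : ℕ} (h : b + 1 ≤ a) : upProd T a b = 1 := by
  unfold upProd; rw [show b + 1 - a = 0 by omega]; simp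

lemma downProd_nil (T : ℕ → G) {a b : ℕ} (h : b + 1 ≤ a) : downProd T b a = 1 := by
  unfold downProd; rw [show b + 1 - a = 0 by omega]; simp

lemma upProd_left (T : ℕ → G) {a b : ℕ} (h : a ≤ b) :
    upProd T a b = T a * upProd T (a + 1) b := by
  unfold upProd
  rw [show b + 1 - a = (b + 1 - (a + 1)) + 1 by omega, List.range_succ_eq_map]
  simp only [List.map_cons, List.prod_cons, List.map_map, Nat.add_zero]
  have : ((fun k => T (a + k)) ∘ Nat.succ) = fun k => T (a + 1 + k) := by
    funext k; simp only [Function.comp_apply]; congr 1; omega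
  rw [this]

lemma upProd_right (T : ℕ → G) {a b : ℕ} (h : a ≤ b + 1) :
    upProd T a (b + 1) = upProd T a b * T (b + 1) := by
  unfold upProd
  rw [show b + 1 + 1 - a = (b + 1 - a) + 1 by omega, List.range_succ]
  simp only [List.map_append, List.prod_append, List.map_cons, List.map_nil,
    List.prod_cons, List.prod_nil, mul_one]
  congr 2
  omega

lemma downProd_left (T : ℕ → G) {a b : ℕ} (h : a ≤ b + 1) :
    downProd T (b + 1) a = T (b + 1) * downProd T b a := by
  unfold downProd
  rw [show b + 1 + 1 - a = (b + 1 - a) + 1 by omega, List.range_succ_eq_map]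
  simp only [List.map_cons, List.prod_cons, List.map_map, Nat.sub_zero]
  have : ((fun k => T (b + 1 - k)) ∘ Nat.succ) = fun k => T (b - k) := by
    funext k; simp only [Function.comp_apply]; congr 1; omega
  rw [this]

lemma downProd_right (T : ℕ → G) {a b : ℕ} (h : a ≤ b) :
    downProd T b a = downProd T b (a + 1) * T a := by
  unfold downProd
  rw [show b + 1 - a = (b + 1 - (a + 1)) + 1 by omega, List.range_succ]
  simp only [List.map_append, List.prod_append, List.map_cons, List.map_nil,
    List.prod_cons, List.prod_nil, mul_one]
  congr 2
  omega

lemma commute_upProd {T : ℕ → G} {x : G} {a b : ℕ}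
    (h : ∀ k, a ≤ k → k ≤ b → Commute x (T k)) : Commute x (upProd T a b) := by
  apply Commute.list_prod_right
  intro y hy
  simp only [List.mem_map, List.mem_range] at hy
  obtain ⟨k, hk, rfl⟩ := hy
  exact h (a + k) (by omega) (by omega)

lemma commute_downProd {T : ℕ → G} {x : G} {a b : ℕ}
    (h : ∀ k, a ≤ k → k ≤ b → Commute x (T k)) : Commute x (downProd T b a) := by
  apply Commute.list_prod_right
  intro y hy
  simp only [List.mem_map, List.mem_range] at hy
  obtain ⟨k, hk, rfl⟩ := hy
  exact h (b - k) (by omega) (by omega)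


section GroupPart

variable {G : Type*} [Group G]

/-- braid conjugation identity -/
lemma braid_conj {a b : G} (h : a * b * a = b * a * b) :
    a * b * a⁻¹ = b⁻¹ * a * b := by
  calc a * b * a⁻¹ = b⁻¹ * (b * a * b) * a⁻¹ := by group
    _ = b⁻¹ * (a * b * a) * a⁻¹ := by rw [h]
    _ = b⁻¹ * a * b := by group

lemma braid_inv {a b : G} (h : a * b * a = b * a * b) :
    a * b⁻¹ * a⁻¹ = b⁻¹ * a⁻¹ * b := by
  have h2 := braid_conj h
  calc a * b⁻¹ * a⁻¹ = (a * b * a⁻¹)⁻¹ := by group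
    _ = (b⁻¹ * a * b)⁻¹ := by rw [h2]
    _ = b⁻¹ * a⁻¹ * b := by group

lemma commute_conj {a b g : G} (h : Commute a b) :
    Commute (g⁻¹ * a * g) (g⁻¹ * b * g) := by
  show _ = _
  calc (g⁻¹ * a * g) * (g⁻¹ * b * g) = g⁻¹ * (a * b) * g := by group
    _ = g⁻¹ * (b * a) * g := by rw [h.eq]
    _ = (g⁻¹ * b * g) * (g⁻¹ * a * g) := by group

/-- `A_i = T_{i-1}⁻¹ ⋯ T_1⁻¹ · T_0 · T_1 ⋯ T_{i-1}` -/
def Ael (T : ℕ → G) (i : ℕ) : G :=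
  downProd (fun k => (T k)⁻¹) (i - 1) 1 * T 0 * upProd T 1 (i - 1)

/-- `B_i = T_i ⋯ T_{n-1} · T_{n-1} ⋯ T_i` -/
def Bel (T : ℕ → G) (n i : ℕ) : G :=
  upProd T i (n - 1) * downProd T (n - 1) i

def Jel (T : ℕ → G) (n i : ℕ) : G := Ael T i * Bel T n i

lemma Ael_one (T : ℕ → G) : Ael T 1 = T 0 := by
  have h1 : upProd T 1 (1 - 1) = 1 := upProd_nil T (by omega)
  have h2 : downProd (fun k => (T k)⁻¹) (1 - 1) 1 = 1 := downProd_nil _ (by omega)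
  rw [Ael, h1, h2, one_mul, mul_one]

lemma Ael_succ (T : ℕ → G) {i : ℕ} (hi : 1 ≤ i) :
    Ael T (i + 1) = (T i)⁻¹ * Ael T i * T i := by
  obtain ⟨m, rfl⟩ : ∃ m, i = m + 1 := ⟨i - 1, by omega⟩
  show downProd (fun k => (T k)⁻¹) (m + 1) 1 * T 0 * upProd T 1 (m + 1) = _
  rw [downProd_left (fun k => (T k)⁻¹) (by omega : 1 ≤ m + 1),
    upProd_right T (by omega : 1 ≤ m + 1)]
  show (T (m+1))⁻¹ * downProd (fun k => (T k)⁻¹) m 1 * T 0 *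
      (upProd T 1 m * T (m+1)) = (T (m+1))⁻¹ * Ael T (m+1) * T (m+1)
  have : Ael T (m + 1) = downProd (fun k => (T k)⁻¹) m 1 * T 0 * upProd T 1 m := rfl
  rw [this]; group

lemma Bel_n (T : ℕ → G) {n : ℕ} (hn : 1 ≤ n) : Bel T n n = 1 := by
  rw [Bel, upProd_nil T (by omega), downProd_nil T (by omega), one_mul]

lemma Bel_nil (T : ℕ → G) {n i : ℕ} (h : n ≤ i) (hn : 1 ≤ n) : Bel T n i = 1 := by
  rw [Bel, upProd_nil T (by omega), downProd_nil T (by omega), one_mul]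

lemma Bel_succ (T : ℕ → G) {n i : ℕ} (h : i ≤ n - 1) :
    Bel T n i = T i * Bel T n (i + 1) * T i := by
  rw [Bel, upProd_left T h, downProd_right T h, Bel]
  group

end GroupPart

section Main

variable {G : Type*} [Group G] {n : ℕ} {T : ℕ → G}
variable (hbraid : ∀ i, 1 ≤ i → i ≤ n - 2 →
    T i * T (i + 1) * T i = T (i + 1) * T i * T (i + 1))
variable (hcomm : ∀ i j, i ≤ n - 1 → j ≤ n - 1 → i + 2 ≤ j → T i * T j = T j * T i)
variable (hC : T 1 * T 0 * T 1 * T 0 = T 0 * T 1 * T 0 * T 1)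

include hcomm in
/-- `T j` commutes with `A_i` when `j ≥ i+1`. -/
lemma comm_T_A_high {i j : ℕ} (hi : 1 ≤ i) (hij : i + 1 ≤ j) (hjn : j ≤ n - 1) :
    Commute (T j) (Ael T i) := by
  refine Commute.mul_right (Commute.mul_right ?_ ?_) ?_
  · refine commute_downProd fun k hk1 hk2 => ?_
    have h1 : Commute (T k) (T j) := hcomm k j (by omega) hjn (by omega)
    exact h1.symm.inv_right
  · have h1 : Commute (T 0) (T j) := hcomm 0 j (by omega) hjn (by omega)
    exact h1.symm
  · refine commute_upProd fun k hk1 hk2 => ?_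
    have h1 : Commute (T k) (T j) := hcomm k j (by omega) hjn (by omega)
    exact h1.symm

include hcomm in
/-- `T j` commutes with `B_i` when `j ≤ i-2`. -/
lemma comm_T_B_low {i j : ℕ} (hij : j + 2 ≤ i) (hjn : j ≤ n - 1) :
    Commute (T j) (Bel T n i) := by
  refine Commute.mul_right ?_ ?_
  · refine commute_upProd fun k hk1 hk2 => ?_
    exact hcomm j k hjn (by omega) (by omega)
  · refine commute_downProd fun k hk1 hk2 => ?_
    exact hcomm j k hjn (by omega) (by omega)

include hbraid hcomm in
/-- `T j` commutes with `A_i` when `1 ≤ j ≤ i-2`. -/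
lemma comm_T_A_low {i : ℕ} (hin : i ≤ n) :
    ∀ j, 1 ≤ j → j + 2 ≤ i → Commute (T j) (Ael T i) := by
  induction i with
  | zero => intro j h1 h2; omega
  | succ i ih =>
    intro j h1 h2
    rcases Nat.lt_or_ge (j + 2) (i + 1) with hj | hj
    · -- j + 2 ≤ i
      have hA : Commute (T j) (Ael T i) := ih (by omega) j h1 (by omega)
      have ha : Commute (T j) (T i) := hcomm j i (by omega) (by omega) (by omega)
      rw [Ael_succ T (by omega : 1 ≤ i)]
      exact (ha.inv_right.mul_right hA).mul_right ha
    · -- j + 2 = i + 1, i.e. i = j + 1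
      have hij : i = j + 1 := by omega
      subst hij
      rw [Ael_succ T (by omega : 1 ≤ j + 1), Ael_succ T (by omega : 1 ≤ j)]
      set a := T j with ha
      set b := T (j + 1) with hb
      set A := Ael T j with hA
      have hbr : a * b * a = b * a * b := hbraid j (by omega) (by omega)
      have hbA : Commute b A := comm_T_A_high hcomm (by omega) (by omega) (by omega)
      have hinv : a * b⁻¹ * a⁻¹ = b⁻¹ * a⁻¹ * b := braid_inv hbr
      show a * (b⁻¹ * (a⁻¹ * A * a) * b) = (b⁻¹ * (a⁻¹ * A * a) * b) * a
      calc a * (b⁻¹ * (a⁻¹ * A * a) * b)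
          = (a * b⁻¹ * a⁻¹) * A * (a * b) := by group
        _ = (b⁻¹ * a⁻¹ * b) * A * (a * b) := by rw [hinv]
        _ = (b⁻¹ * a⁻¹) * (b * A) * (a * b) := by group
        _ = (b⁻¹ * a⁻¹) * (A * b) * (a * b) := by rw [hbA.eq]
        _ = b⁻¹ * a⁻¹ * A * (b * a * b) := by group
        _ = b⁻¹ * a⁻¹ * A * (a * b * a) := by rw [← hbr]
        _ = (b⁻¹ * (a⁻¹ * A * a) * b) * a := by group

include hbraid hcomm in
/-- `T j` commutes with `B_i` when `j ≥ i+1`. -/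
lemma comm_T_B_high :
    ∀ k i, n = i + k → 1 ≤ i → ∀ j, i + 1 ≤ j → j ≤ n - 1 → Commute (T j) (Bel T n i) := by
  intro k
  induction k with
  | zero =>
    intro i hik hi j hj1 hj2
    rw [Bel_nil T (by omega) (by omega)]
    exact Commute.one_right _
  | succ k ih =>
    intro i hik hi j hj1 hj2
    have hi1 : i ≤ n - 1 := by omega
    rw [Bel_succ T hi1]
    rcases Nat.lt_or_ge (i + 1) j with hj | hj
    · -- j ≥ i + 2
      have hB : Commute (T j) (Bel T n (i + 1)) := ih (i + 1) (by omega) (by omega) j (by omega) hj2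
      have ha' : Commute (T i) (T j) := hcomm i j (by omega) (by omega) (by omega)
      have ha : Commute (T j) (T i) := ha'.symm
      exact (ha.mul_right hB).mul_right ha
    · -- j = i + 1
      have hji : j = i + 1 := by omega
      subst hji
      rw [Bel_succ T (by omega : i + 1 ≤ n - 1)]
      set a := T i with ha
      set b := T (i + 1) with hb
      set Z := Bel T n (i + 2) with hZ
      have hbr : a * b * a = b * a * b := hbraid i (by omega) (by omega)
      have hTZ : Commute a Z := comm_T_B_low hcomm (by omega) (by omega)
      show b * (a * (b * Z * b) * a) = (a * (b * Z * b) * a) * b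
      calc b * (a * (b * Z * b) * a)
          = (b * a * b) * Z * (b * a) := by group
        _ = (a * b * a) * Z * (b * a) := by rw [← hbr]
        _ = (a * b) * (a * Z) * (b * a) := by group
        _ = (a * b) * (Z * a) * (b * a) := by rw [hTZ.eq]
        _ = (a * b) * Z * (a * b * a) := by group
        _ = (a * b) * Z * (b * a * b) := by rw [hbr]
        _ = (a * (b * Z * b) * a) * b := by group

lemma commute_Ael_of {x : G} {i : ℕ} (h0 : Commute x (T 0))
    (h : ∀ k, 1 ≤ k → k ≤ i - 1 → Commute x (T k)) : Commute x (Ael T i) := by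
  refine Commute.mul_right (Commute.mul_right ?_ h0) ?_
  · exact commute_downProd fun k hk1 hk2 => (h k hk1 hk2).inv_right
  · exact commute_upProd h

include hcomm in
lemma comm_A_B {i j : ℕ} (hi : 1 ≤ i) (hij : i + 1 ≤ j) (hin : i ≤ n) :
    Commute (Ael T i) (Bel T n j) := by
  refine (commute_Ael_of ?_ ?_).symm
  · exact (comm_T_B_low hcomm (by omega) (by omega)).symm
  · intro k hk1 hk2
    exact (comm_T_B_low hcomm (by omega) (by omega)).symm

include hbraid hcomm hC in
/-- the type-C relation propagated: `T i` commutes with `A_i T_i A_i`. -/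
lemma relA : ∀ i, 1 ≤ i → i ≤ n - 1 → Commute (T i) (Ael T i * T i * Ael T i) := by
  intro i hi
  induction i, hi using Nat.le_induction with
  | base =>
    intro _
    rw [Ael_one]
    show T 1 * (T 0 * T 1 * T 0) = (T 0 * T 1 * T 0) * T 1
    simp only [← mul_assoc]
    exact hC
  | succ i hi ih =>
    intro hin
    set a := T i with ha
    set b := T (i + 1) with hb
    set A := Ael T i with hA
    have hbr : a * b * a = b * a * b := hbraid i (by omega) (by omega)
    have hbA : Commute b A := comm_T_A_high hcomm hi (by omega) (by omega)
    have hX : Ael T (i + 1) * T (i + 1) * Ael T (i + 1) =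
        (b * a)⁻¹ * (A * a * A) * (b * a) := by
      rw [Ael_succ T hi]
      calc (a⁻¹ * A * a) * b * (a⁻¹ * A * a)
          = a⁻¹ * A * (a * b * a⁻¹) * A * a := by group
        _ = a⁻¹ * A * (b⁻¹ * a * b) * A * a := by rw [braid_conj hbr]
        _ = a⁻¹ * (A * b⁻¹) * a * (b * A) * a := by group
        _ = a⁻¹ * (b⁻¹ * A) * a * (b * A) * a := by rw [← hbA.inv_left.eq]
        _ = a⁻¹ * (b⁻¹ * A) * a * (A * b) * a := by rw [hbA.eq]
        _ = (b * a)⁻¹ * (A * a * A) * (b * a) := by group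
    have hw : (b * a) * b * (b * a)⁻¹ = a := by
      calc (b * a) * b * (b * a)⁻¹ = (b * a * b) * (a⁻¹ * b⁻¹) := by group
        _ = (a * b * a) * (a⁻¹ * b⁻¹) := by rw [← hbr]
        _ = a := by group
    have hb' : b = (b * a)⁻¹ * a * (b * a) := by
      calc b = (b * a)⁻¹ * (b * a * b) := by group
        _ = (b * a)⁻¹ * (a * b * a) := by rw [← hbr]
        _ = (b * a)⁻¹ * a * (b * a) := by group
    have hc := commute_conj (g := b * a) (ih (by omega))
    rw [← hb'] at hc
    rw [← hX] at hc
    exact hc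

include hbraid hcomm in
lemma relB_aux (hn1 : 1 ≤ n) :
    ∀ k i, n ≤ i + k → 1 ≤ i →
      Commute (T i) (Bel T n (i + 1) * T i * Bel T n (i + 1)) := by
  intro k
  induction k with
  | zero =>
    intro i hik hi
    rw [Bel_nil T (by omega) hn1]
    simp
  | succ k ih =>
    intro i hik hi
    rcases Nat.lt_or_ge (i + k) n with hlt | hge
    · -- n = i + k + 1
      rcases Nat.eq_zero_or_pos k with hk | hk
      · subst hk
        rw [Bel_nil T (by omega) hn1]
        simp
      · have hi2 : i + 2 ≤ n := by omega
        rw [Bel_succ T (by omega : i + 1 ≤ n - 1)]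
        set a := T i with ha
        set b := T (i + 1) with hb
        set Z := Bel T n (i + 2) with hZ
        have hbr : a * b * a = b * a * b := hbraid i (by omega) (by omega)
        have hTZ : Commute a Z := comm_T_B_low hcomm (by omega) (by omega)
        have hIZ : Commute b (Z * b * Z) := ih (i + 1) (by omega) (by omega)
        have hY : (b * Z * b) * a * (b * Z * b) = (b * a) * (Z * b * Z) * (a * b) := by
          calc (b * Z * b) * a * (b * Z * b)
              = b * Z * (b * a * b) * Z * b := by group
            _ = b * Z * (a * b * a) * Z * b := by rw [← hbr]
            _ = b * (Z * a) * b * (a * Z) * b := by group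
            _ = b * (a * Z) * b * (a * Z) * b := by rw [← hTZ.eq]
            _ = b * (a * Z) * b * (Z * a) * b := by nth_rw 2 [hTZ.eq]
            _ = (b * a) * (Z * b * Z) * (a * b) := by group
        show a * ((b * Z * b) * a * (b * Z * b)) = ((b * Z * b) * a * (b * Z * b)) * a
        rw [hY]
        calc a * ((b * a) * (Z * b * Z) * (a * b))
            = (a * b * a) * (Z * b * Z) * (a * b) := by group
          _ = (b * a * b) * (Z * b * Z) * (a * b) := by rw [hbr]
          _ = (b * a) * (b * (Z * b * Z)) * (a * b) := by group
          _ = (b * a) * ((Z * b * Z) * b) * (a * b) := by rw [hIZ.eq]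
          _ = (b * a) * (Z * b * Z) * (b * a * b) := by group
          _ = (b * a) * (Z * b * Z) * (a * b * a) := by rw [← hbr]
          _ = ((b * a) * (Z * b * Z) * (a * b)) * a := by group
    · exact ih i (by omega) hi

lemma Jel_succ (T : ℕ → G) {n i : ℕ} (hi : 1 ≤ i) (hin : i ≤ n - 1) :
    Jel T n (i + 1) = (T i)⁻¹ * Jel T n i * (T i)⁻¹ := by
  rw [Jel, Jel, Ael_succ T hi, Bel_succ T hin]
  group

include hbraid hcomm hC in
lemma adjacent (hn1 : 1 ≤ n) {i : ℕ} (hi : 1 ≤ i) (hin : i + 1 ≤ n) :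
    Commute (Jel T n i) (Jel T n (i + 1)) := by
  have e1 : Jel T n i = Ael T i * (T i * Bel T n (i + 1) * T i) := by
    rw [Jel, Bel_succ T (by omega : i ≤ n - 1)]
  have e2 : Jel T n (i + 1) = ((T i)⁻¹ * Ael T i * T i) * Bel T n (i + 1) := by
    rw [Jel, Ael_succ T hi]
  set a := T i with ha
  set A := Ael T i with hA
  set B := Bel T n (i + 1) with hB
  have hAB : Commute A B := comm_A_B hcomm hi (by omega) (by omega)
  have hX : Commute a (A * a * A) := relA hbraid hcomm hC i hi (by omega)
  have hYY : Commute a (B * a * B) := relB_aux hbraid hcomm hn1 (n - i) i (by omega) hi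
  have hXY : Commute a ((A * a * A) * (B * a * B)) := hX.mul_right hYY
  have f1 : Jel T n i * Jel T n (i + 1) = (A * a * A) * (B * a * B) := by
    rw [e1, e2]
    calc A * (a * B * a) * ((a⁻¹ * A * a) * B)
        = (A * a) * (B * A) * (a * B) := by group
      _ = (A * a) * (A * B) * (a * B) := by rw [← hAB.eq]
      _ = (A * a * A) * (B * a * B) := by group
  have f2 : Jel T n (i + 1) * Jel T n i = a⁻¹ * ((A * a * A) * (B * a * B)) * a := by
    rw [e1, e2]
    calc ((a⁻¹ * A * a) * B) * (A * (a * B * a))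
        = a⁻¹ * ((A * a) * (B * A) * (a * B)) * a := by group
      _ = a⁻¹ * ((A * a) * (A * B) * (a * B)) * a := by rw [← hAB.eq]
      _ = a⁻¹ * ((A * a * A) * (B * a * B)) * a := by group
  show Jel T n i * Jel T n (i + 1) = Jel T n (i + 1) * Jel T n i
  rw [f1, f2]
  calc (A * a * A) * (B * a * B)
      = a⁻¹ * (a * ((A * a * A) * (B * a * B))) := by group
    _ = a⁻¹ * (((A * a * A) * (B * a * B)) * a) := by rw [hXY.eq]
    _ = a⁻¹ * ((A * a * A) * (B * a * B)) * a := by group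

include hbraid hcomm hC in
lemma comm_J (hn1 : 1 ≤ n) {i : ℕ} (hi : 1 ≤ i) :
    ∀ j, i + 1 ≤ j → j ≤ n → Commute (Jel T n i) (Jel T n j) := by
  intro j hj
  induction j, hj using Nat.le_induction with
  | base =>
    intro h
    exact adjacent hbraid hcomm hC hn1 hi h
  | succ j hj ihj =>
    intro hj1
    rw [Jel_succ T (by omega : 1 ≤ j) (by omega : j ≤ n - 1)]
    have hTA : Commute (T j) (Ael T i) := comm_T_A_high hcomm hi (by omega) (by omega)
    have hTB : Commute (T j) (Bel T n i) :=
      comm_T_B_high hbraid hcomm (n - i) i (by omega) hi j (by omega) (by omega)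
    have hTJ : Commute (Jel T n i) (T j) := by
      rw [Jel]; exact (hTA.mul_right hTB).symm
    exact (hTJ.inv_right.mul_right (ihj (by omega))).mul_right hTJ.inv_right

end Main
end SfJAux

/-- In the braid group of type `C`, the elements
`𝖩_i = (T_{i-1}⁻¹ ⋯ T_1⁻¹ T_0 T_1 ⋯ T_{i-1}) (T_i ⋯ T_{n-1} · T_{n-1} ⋯ T_i)`
pairwise commute. -/
theorem sfJ_commute {G : Type*} [Group G] (n : ℕ) (hn : 2 ≤ n) (T : ℕ → G)
    (hbraid : ∀ i, 1 ≤ i → i ≤ n - 2 →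
      T i * T (i + 1) * T i = T (i + 1) * T i * T (i + 1))
    (hcomm : ∀ i j, i ≤ n - 1 → j ≤ n - 1 → i + 2 ≤ j → T i * T j = T j * T i)
    (hC : T 1 * T 0 * T 1 * T 0 = T 0 * T 1 * T 0 * T 1) :
    ∀ i j, 1 ≤ i → i ≤ n → 1 ≤ j → j ≤ n →
      ((downProd (fun k => (T k)⁻¹) (i - 1) 1 * T 0 * upProd T 1 (i - 1)) *
          (upProd T i (n - 1) * downProd T (n - 1) i)) *
        ((downProd (fun k => (T k)⁻¹) (j - 1) 1 * T 0 * upProd T 1 (j - 1)) *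
          (upProd T j (n - 1) * downProd T (n - 1) j)) =
      ((downProd (fun k => (T k)⁻¹) (j - 1) 1 * T 0 * upProd T 1 (j - 1)) *
          (upProd T j (n - 1) * downProd T (n - 1) j)) *
        ((downProd (fun k => (T k)⁻¹) (i - 1) 1 * T 0 * upProd T 1 (i - 1)) *
          (upProd T i (n - 1) * downProd T (n - 1) i)) := by
  intro i j hi1 hi2 hj1 hj2
  show SfJAux.Jel T n i * SfJAux.Jel T n j = SfJAux.Jel T n j * SfJAux.Jel T n i
  rcases lt_trichotomy i j with h | h | h
  · exact SfJAux.comm_J hbraid hcomm hC (by omega) hi1 j (by omega) hj2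
  · subst h; rfl
  · exact (SfJAux.comm_J hbraid hcomm hC (by omega) hj1 i (by omega) hi2).symm.eq
end

section
/- For ε = ±1 and all i such that both i and i+ε lie in {1, …, n-1}, the following identities hold: κ_i T_{i+ε} T_i = T_{i+ε} T_i κ_{i+ε}; κ_i κ_{i+ε} κ_i = κ_i; (T_i - (q - q^{-1})) κ_{i+ε} (T_i - (q - q^{-1})) = (T_{i+ε} - (q - q^{-1})) κ_i (T_{i+ε} - (q - q^{-1})); T_{i+ε} κ_i T_{i+ε} = T_i^{-1} κ_{i+ε} T_i^{-1}; κ_i T_{i+ε} T_i = κ_i κ_{i+ε}; and κ_i T_{i+ε}^{-1} T_i^{-1} = κ_i κ_{i+ε}. -/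
set_option linter.unusedSectionVars false
set_option linter.unusedVariables false
set_option maxHeartbeats 1000000


/-- The BMW element `κ = 1 - (T - T⁻¹)/(q - q⁻¹)` attached to an invertible element `T`. -/
noncomputable def kap {A : Type*} [Ring A] [Algebra ℂ A] (q : ℂ) (x : Aˣ) : A :=
  1 - (q - q⁻¹)⁻¹ • ((x : A) - ((x⁻¹ : Aˣ) : A))

/-- The six derived BMW identities for a pair of neighbouring generators `x = T_i`,
`y = T_{i+ε}`. -/
noncomputable def bmwSix {A : Type*} [Ring A] [Algebra ℂ A] (q : ℂ) (x y : Aˣ) : Prop :=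
  kap q x * (y : A) * (x : A) = (y : A) * (x : A) * kap q y ∧
  kap q x * kap q y * kap q x = kap q x ∧
  ((x : A) - (q - q⁻¹) • (1 : A)) * kap q y * ((x : A) - (q - q⁻¹) • (1 : A)) =
    ((y : A) - (q - q⁻¹) • (1 : A)) * kap q x * ((y : A) - (q - q⁻¹) • (1 : A)) ∧
  (y : A) * kap q x * (y : A) = ((x⁻¹ : Aˣ) : A) * kap q y * ((x⁻¹ : Aˣ) : A) ∧
  kap q x * (y : A) * (x : A) = kap q x * kap q y ∧
  kap q x * ((y⁻¹ : Aˣ) : A) * ((x⁻¹ : Aˣ) : A) = kap q x * kap q y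

section BMWAux

variable {A : Type*} [Ring A] [Algebra ℂ A] (q ν : ℂ)

private lemma kap_exp_r (y : Aˣ) (a : A) :
    a * kap q y = a - (q - q⁻¹)⁻¹ • (a * (y:A)) + (q - q⁻¹)⁻¹ • (a * ((y⁻¹:Aˣ):A)) := by
  simp only [kap, mul_sub, mul_one, mul_smul_comm, smul_sub]
  module

private lemma kap_exp_l (y : Aˣ) (a : A) :
    kap q y * a = a - (q - q⁻¹)⁻¹ • ((y:A) * a) + (q - q⁻¹)⁻¹ • (((y⁻¹:Aˣ):A) * a) := by
  simp only [kap, sub_mul, one_mul, smul_mul_assoc, smul_sub]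
  module

private lemma braidU (x y : Aˣ) (h : (x:A)*y*x = (y:A)*x*y) : x*y*x = y*x*y :=
  Units.ext (by simpa using h)

private lemma braid1U (x y : Aˣ) (h : x*y*x = y*x*y) : x⁻¹*y*x = y*x*y⁻¹ := by
  have h2 : x*(x⁻¹*y*x) = x*(y*x*y⁻¹) := by
    rw [show x*(x⁻¹*y*x) = y*x by group, show x*(y*x*y⁻¹) = (x*y*x)*y⁻¹ by group, h]; group
  exact mul_left_cancel h2

private lemma braid2U (x y : Aˣ) (h : x*y*x = y*x*y) : x⁻¹*y⁻¹*x⁻¹ = y⁻¹*x⁻¹*y⁻¹ := by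
  have h2 : (x*y*x)*(x⁻¹*y⁻¹*x⁻¹) = (x*y*x)*(y⁻¹*x⁻¹*y⁻¹) := by
    rw [show (x*y*x)*(x⁻¹*y⁻¹*x⁻¹) = 1 by group]
    nth_rewrite 1 [h]
    group
  exact mul_left_cancel h2

private lemma braid3U (x y : Aˣ) (h : x*y*x = y*x*y) : x*y⁻¹*x⁻¹ = y⁻¹*x⁻¹*y := by
  have b1 := braid1U x y h
  have h2 : y*(x*y⁻¹*x⁻¹)*x = y*(y⁻¹*x⁻¹*y)*x := by
    rw [show y*(x*y⁻¹*x⁻¹)*x = y*x*y⁻¹ by group, show y*(y⁻¹*x⁻¹*y)*x = x⁻¹*y*x by group, b1]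
  exact mul_left_cancel (mul_right_cancel h2)

private lemma coeA {x y z u v w : Aˣ} (h : x*y*z = u*v*w) :
    (x:A)*y*z = (u:A)*v*w := by
  have := congrArg (Units.val) h
  simpa using this

private lemma kap_mul_inv (hν : ν ≠ 0) (x : Aˣ) (h : kap q x * (x:A) = ν • kap q x) :
    kap q x * ((x⁻¹:Aˣ):A) = ν⁻¹ • kap q x := by
  have h2 : kap q x * (x:A) * ((x⁻¹:Aˣ):A) = kap q x := by
    rw [mul_assoc]; simp
  calc kap q x * ((x⁻¹:Aˣ):A) = ν⁻¹ • ((ν • kap q x) * ((x⁻¹:Aˣ):A)) := by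
        rw [smul_mul_assoc, smul_smul, inv_mul_cancel₀ hν, one_smul]
    _ = ν⁻¹ • (kap q x * (x:A) * ((x⁻¹:Aˣ):A)) := by rw [h]
    _ = ν⁻¹ • kap q x := by rw [h2]

private lemma inv_mul_kap (hν : ν ≠ 0) (x : Aˣ) (h : (x:A) * kap q x = ν • kap q x) :
    ((x⁻¹:Aˣ):A) * kap q x = ν⁻¹ • kap q x := by
  have h2 : ((x⁻¹:Aˣ):A) * ((x:A) * kap q x) = kap q x := by
    rw [← mul_assoc]; simp
  calc ((x⁻¹:Aˣ):A) * kap q x = ν⁻¹ • (((x⁻¹:Aˣ):A) * (ν • kap q x)) := by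
        rw [mul_smul_comm, smul_smul, inv_mul_cancel₀ hν, one_smul]
    _ = ν⁻¹ • kap q x := by rw [← h, h2]

private lemma x_sub_eq (hd : q - q⁻¹ ≠ 0) (x : Aˣ) :
    (x:A) - (q - q⁻¹) • (1:A) = ((x⁻¹:Aˣ):A) - (q - q⁻¹) • kap q x := by
  rw [kap, smul_sub, smul_smul, mul_inv_cancel₀ hd, one_smul]
  module

private lemma one_lem (x y : Aˣ) (hbr : (x:A)*y*x = (y:A)*x*y) :
    kap q x * (y:A) * (x:A) = (y:A) * (x:A) * kap q y := by
  have b1 : ((x⁻¹:Aˣ):A)*(y:A)*(x:A) = (y:A)*(x:A)*((y⁻¹:Aˣ):A) :=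
    coeA (braid1U x y (braidU x y hbr))
  rw [mul_assoc, kap_exp_l q x ((y:A)*(x:A)), kap_exp_r q y ((y:A)*(x:A))]
  simp only [← mul_assoc]
  rw [hbr, b1]

private lemma one_lem' (x y : Aˣ) (hbr : (x:A)*y*x = (y:A)*x*y) :
    kap q x * ((y⁻¹:Aˣ):A) * ((x⁻¹:Aˣ):A) = ((y⁻¹:Aˣ):A) * ((x⁻¹:Aˣ):A) * kap q y := by
  have hU := braidU x y hbr
  have b2 : ((x⁻¹:Aˣ):A)*((y⁻¹:Aˣ):A)*((x⁻¹:Aˣ):A)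
      = ((y⁻¹:Aˣ):A)*((x⁻¹:Aˣ):A)*((y⁻¹:Aˣ):A) := coeA (braid2U x y hU)
  have b3 : (x:A)*((y⁻¹:Aˣ):A)*((x⁻¹:Aˣ):A) = ((y⁻¹:Aˣ):A)*((x⁻¹:Aˣ):A)*(y:A) :=
    coeA (braid3U x y hU)
  rw [mul_assoc, kap_exp_l q x (((y⁻¹:Aˣ):A)*((x⁻¹:Aˣ):A)),
    kap_exp_r q y (((y⁻¹:Aˣ):A)*((x⁻¹:Aˣ):A))]
  simp only [← mul_assoc]
  rw [b2, b3]

private lemma A1 (hν : ν ≠ 0) (x y : Aˣ) (hbr : (x:A)*y*x = (y:A)*x*y)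
    (hxL : kap q x * (x:A) = ν • kap q x)
    (hxyx : kap q x * (y:A) * kap q x = ν⁻¹ • kap q x) :
    kap q x * kap q y * (x:A) = kap q x * ((y⁻¹:Aˣ):A) := by
  have h1 : kap q y * (x:A) * (y:A) = (x:A) * (y:A) * kap q x := one_lem q y x hbr.symm
  have h2 : kap q y * (x:A) = (x:A) * (y:A) * kap q x * ((y⁻¹:Aˣ):A) := by
    calc kap q y * (x:A) = kap q y * (x:A) * ((y:A) * ((y⁻¹:Aˣ):A)) := by simp
      _ = kap q y * (x:A) * (y:A) * ((y⁻¹:Aˣ):A) := by rw [← mul_assoc]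
      _ = (x:A) * (y:A) * kap q x * ((y⁻¹:Aˣ):A) := by rw [h1]
  calc kap q x * kap q y * (x:A) = kap q x * (kap q y * (x:A)) := by rw [mul_assoc]
    _ = kap q x * ((x:A) * (y:A) * kap q x * ((y⁻¹:Aˣ):A)) := by rw [h2]
    _ = kap q x * (x:A) * (y:A) * kap q x * ((y⁻¹:Aˣ):A) := by simp only [← mul_assoc]
    _ = (ν • kap q x) * (y:A) * kap q x * ((y⁻¹:Aˣ):A) := by rw [hxL]
    _ = ν • (kap q x * (y:A) * kap q x * ((y⁻¹:Aˣ):A)) := by simp only [smul_mul_assoc]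
    _ = ν • ((ν⁻¹ • kap q x) * ((y⁻¹:Aˣ):A)) := by rw [hxyx]
    _ = kap q x * ((y⁻¹:Aˣ):A) := by
        rw [smul_mul_assoc, smul_smul, mul_inv_cancel₀ hν, one_smul]

private lemma B1 (hν : ν ≠ 0) (x y : Aˣ) (hbr : (x:A)*y*x = (y:A)*x*y)
    (hxL : kap q x * (x:A) = ν • kap q x)
    (hxyix : kap q x * ((y⁻¹:Aˣ):A) * kap q x = ν • kap q x) :
    kap q x * kap q y * ((x⁻¹:Aˣ):A) = kap q x * (y:A) := by
  have h1 : kap q y * ((x⁻¹:Aˣ):A) * ((y⁻¹:Aˣ):A)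
      = ((x⁻¹:Aˣ):A) * ((y⁻¹:Aˣ):A) * kap q x := one_lem' q y x hbr.symm
  have h2 : kap q y * ((x⁻¹:Aˣ):A)
      = ((x⁻¹:Aˣ):A) * ((y⁻¹:Aˣ):A) * kap q x * (y:A) := by
    calc kap q y * ((x⁻¹:Aˣ):A)
        = kap q y * ((x⁻¹:Aˣ):A) * (((y⁻¹:Aˣ):A) * (y:A)) := by simp
      _ = kap q y * ((x⁻¹:Aˣ):A) * ((y⁻¹:Aˣ):A) * (y:A) := by rw [← mul_assoc]
      _ = ((x⁻¹:Aˣ):A) * ((y⁻¹:Aˣ):A) * kap q x * (y:A) := by rw [h1]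
  have hKi := kap_mul_inv q ν hν x hxL
  calc kap q x * kap q y * ((x⁻¹:Aˣ):A) = kap q x * (kap q y * ((x⁻¹:Aˣ):A)) := by
        rw [mul_assoc]
    _ = kap q x * (((x⁻¹:Aˣ):A) * ((y⁻¹:Aˣ):A) * kap q x * (y:A)) := by rw [h2]
    _ = kap q x * ((x⁻¹:Aˣ):A) * ((y⁻¹:Aˣ):A) * kap q x * (y:A) := by
        simp only [← mul_assoc]
    _ = (ν⁻¹ • kap q x) * ((y⁻¹:Aˣ):A) * kap q x * (y:A) := by rw [hKi]
    _ = ν⁻¹ • (kap q x * ((y⁻¹:Aˣ):A) * kap q x * (y:A)) := by simp only [smul_mul_assoc]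
    _ = ν⁻¹ • ((ν • kap q x) * (y:A)) := by rw [hxyix]
    _ = kap q x * (y:A) := by
        rw [smul_mul_assoc, smul_smul, inv_mul_cancel₀ hν, one_smul]

private lemma five_lem (hν : ν ≠ 0) (x y : Aˣ) (hbr : (x:A)*y*x = (y:A)*x*y)
    (hxL : kap q x * (x:A) = ν • kap q x)
    (hxyix : kap q x * ((y⁻¹:Aˣ):A) * kap q x = ν • kap q x) :
    kap q x * (y:A) * (x:A) = kap q x * kap q y := by
  rw [← B1 q ν hν x y hbr hxL hxyix, mul_assoc]
  simp

private lemma six_lem (hν : ν ≠ 0) (x y : Aˣ) (hbr : (x:A)*y*x = (y:A)*x*y)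
    (hxL : kap q x * (x:A) = ν • kap q x)
    (hxyx : kap q x * (y:A) * kap q x = ν⁻¹ • kap q x) :
    kap q x * ((y⁻¹:Aˣ):A) * ((x⁻¹:Aˣ):A) = kap q x * kap q y := by
  rw [← A1 q ν hν x y hbr hxL hxyx, mul_assoc]
  simp

private lemma two_lem (hν : ν ≠ 0) (x y : Aˣ)
    (hxL : kap q x * (x:A) = ν • kap q x)
    (hxyx : kap q x * (y:A) * kap q x = ν⁻¹ • kap q x)
    (hxyix : kap q x * ((y⁻¹:Aˣ):A) * kap q x = ν • kap q x) :
    kap q x * kap q y * kap q x = kap q x := by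
  have hKi := kap_mul_inv q ν hν x hxL
  rw [kap_exp_r q y (kap q x)]
  simp only [sub_mul, add_mul, smul_mul_assoc]
  rw [hxyx, hxyix, kap_exp_r q x (kap q x), hxL, hKi]
  module

private lemma C1 (hν : ν ≠ 0) (x y : Aˣ) (hbr : (x:A)*y*x = (y:A)*x*y)
    (hyL : kap q y * (y:A) = ν • kap q y)
    (hyxiy : kap q y * ((x⁻¹:Aˣ):A) * kap q y = ν • kap q y) :
    (y:A) * kap q x = ((x⁻¹:Aˣ):A) * kap q y * kap q x := by
  have h1 : kap q y * (x:A) * (y:A) = (x:A) * (y:A) * kap q x := one_lem q y x hbr.symm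
  have h5 : kap q y * (x:A) * (y:A) = kap q y * kap q x :=
    five_lem q ν hν y x hbr.symm hyL hyxiy
  have e : (x:A) * (y:A) * kap q x = kap q y * kap q x := h1.symm.trans h5
  calc (y:A) * kap q x = ((x⁻¹:Aˣ):A) * ((x:A) * (y:A) * kap q x) := by
        rw [← mul_assoc, ← mul_assoc]
        simp
    _ = ((x⁻¹:Aˣ):A) * (kap q y * kap q x) := by rw [e]
    _ = ((x⁻¹:Aˣ):A) * kap q y * kap q x := by rw [mul_assoc]

private lemma four_lem (hν : ν ≠ 0) (x y : Aˣ) (hbr : (x:A)*y*x = (y:A)*x*y)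
    (hyL : kap q y * (y:A) = ν • kap q y)
    (hyxy : kap q y * (x:A) * kap q y = ν⁻¹ • kap q y)
    (hyxiy : kap q y * ((x⁻¹:Aˣ):A) * kap q y = ν • kap q y) :
    (y:A) * kap q x * (y:A) = ((x⁻¹:Aˣ):A) * kap q y * ((x⁻¹:Aˣ):A) := by
  have c1 := C1 q ν hν x y hbr hyL hyxiy
  have a1s : kap q y * kap q x * (y:A) = kap q y * ((x⁻¹:Aˣ):A) :=
    A1 q ν hν y x hbr.symm hyL hyxy
  calc (y:A) * kap q x * (y:A)
      = ((x⁻¹:Aˣ):A) * kap q y * kap q x * (y:A) := by rw [c1]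
    _ = ((x⁻¹:Aˣ):A) * (kap q y * kap q x * (y:A)) := by simp only [mul_assoc]
    _ = ((x⁻¹:Aˣ):A) * (kap q y * ((x⁻¹:Aˣ):A)) := by rw [a1s]
    _ = ((x⁻¹:Aˣ):A) * kap q y * ((x⁻¹:Aˣ):A) := by rw [mul_assoc]

private lemma three_lem (hν : ν ≠ 0) (hd : q - q⁻¹ ≠ 0) (x y : Aˣ)
    (hbr : (x:A)*y*x = (y:A)*x*y)
    (hxL : kap q x * (x:A) = ν • kap q x)
    (hyL : kap q y * (y:A) = ν • kap q y)
    (hxyx : kap q x * (y:A) * kap q x = ν⁻¹ • kap q x)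
    (hxyix : kap q x * ((y⁻¹:Aˣ):A) * kap q x = ν • kap q x)
    (hyxy : kap q y * (x:A) * kap q y = ν⁻¹ • kap q y)
    (hyxiy : kap q y * ((x⁻¹:Aˣ):A) * kap q y = ν • kap q y) :
    ((x:A) - (q - q⁻¹) • (1:A)) * kap q y * ((x:A) - (q - q⁻¹) • (1:A))
      = ((y:A) - (q - q⁻¹) • (1:A)) * kap q x * ((y:A) - (q - q⁻¹) • (1:A)) := by
  have hfour := four_lem q ν hν x y hbr hyL hyxy hyxiy
  have hc1 := C1 q ν hν x y hbr hyL hyxiy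
  have hb1 := B1 q ν hν x y hbr hxL hxyix
  have htwo := two_lem q ν hν x y hxL hxyx hxyix
  rw [x_sub_eq q hd x]
  simp only [sub_mul, mul_sub, smul_mul_assoc, mul_smul_comm, smul_sub, smul_smul,
    one_mul, mul_one]
  rw [← hfour, ← hc1, hb1, htwo]

private lemma bmw_pair (hν : ν ≠ 0) (hd : q - q⁻¹ ≠ 0) (x y : Aˣ)
    (hbr : (x:A)*y*x = (y:A)*x*y)
    (hxL : kap q x * (x:A) = ν • kap q x)
    (hyL : kap q y * (y:A) = ν • kap q y)
    (hxyx : kap q x * (y:A) * kap q x = ν⁻¹ • kap q x)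
    (hxyix : kap q x * ((y⁻¹:Aˣ):A) * kap q x = ν • kap q x)
    (hyxy : kap q y * (x:A) * kap q y = ν⁻¹ • kap q y)
    (hyxiy : kap q y * ((x⁻¹:Aˣ):A) * kap q y = ν • kap q y) :
    bmwSix q x y :=
  ⟨one_lem q x y hbr,
   two_lem q ν hν x y hxL hxyx hxyix,
   three_lem q ν hν hd x y hbr hxL hyL hxyx hxyix hyxy hyxiy,
   four_lem q ν hν x y hbr hyL hyxy hyxiy,
   five_lem q ν hν x y hbr hxL hxyix,
   six_lem q ν hν x y hbr hxL hxyx⟩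

end BMWAux

/-- In the Birman–Murakami–Wenzl algebra, the identities (2.9)–(2.14) of the paper hold
for `ε = +1` (first block) and `ε = -1` (second block). -/
theorem bmw_derived_identities {A : Type*} [Ring A] [Algebra ℂ A] (n : ℕ) (hn : 3 ≤ n)
    (q ν : ℂ) (hq0 : q ≠ 0) (hν0 : ν ≠ 0) (hq1 : q ^ 2 ≠ 1)
    (T : ℕ → Aˣ)
    (hbraid : ∀ i, 1 ≤ i → i + 2 ≤ n →
      (T i : A) * (T (i + 1) : A) * (T i : A) = (T (i + 1) : A) * (T i : A) * (T (i + 1) : A))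
    (hcomm : ∀ i j, 1 ≤ i → j + 1 ≤ n → i + 2 ≤ j → (T i : A) * (T j : A) = (T j : A) * (T i : A))
    (hκT : ∀ i, 1 ≤ i → i + 1 ≤ n →
      kap q (T i) * (T i : A) = ν • kap q (T i) ∧ (T i : A) * kap q (T i) = ν • kap q (T i))
    (hκdown : ∀ i, 2 ≤ i → i + 1 ≤ n →
      kap q (T i) * (T (i - 1) : A) * kap q (T i) = ν⁻¹ • kap q (T i) ∧
      kap q (T i) * (((T (i - 1))⁻¹ : Aˣ) : A) * kap q (T i) = ν • kap q (T i))
    (hκup : ∀ i, 1 ≤ i → i + 2 ≤ n →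
      kap q (T i) * (T (i + 1) : A) * kap q (T i) = ν⁻¹ • kap q (T i) ∧
      kap q (T i) * (((T (i + 1))⁻¹ : Aˣ) : A) * kap q (T i) = ν • kap q (T i)) :
    (∀ i, 1 ≤ i → i + 2 ≤ n → bmwSix q (T i) (T (i + 1))) ∧
    (∀ i, 2 ≤ i → i + 1 ≤ n → bmwSix q (T i) (T (i - 1))) := by
  have hd : q - q⁻¹ ≠ 0 := by
    intro h
    apply hq1
    have h1 : q = q⁻¹ := sub_eq_zero.mp h
    rw [sq]
    nth_rewrite 2 [h1]
    exact mul_inv_cancel₀ hq0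
  constructor
  · intro i h1 h2
    have hup := hκup i h1 h2
    have hdn := hκdown (i+1) (by omega) (by omega)
    rw [Nat.add_sub_cancel] at hdn
    exact bmw_pair q ν hν0 hd (T i) (T (i+1)) (hbraid i h1 h2)
      (hκT i h1 (by omega)).1 (hκT (i+1) (by omega) (by omega)).1
      hup.1 hup.2 hdn.1 hdn.2
  · intro i h1 h2
    have e : i - 1 + 1 = i := by omega
    have hb := hbraid (i-1) (by omega) (by omega)
    rw [e] at hb
    have hup := hκup (i-1) (by omega) (by omega)
    rw [e] at hup
    have hdn := hκdown i h1 h2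
    exact bmw_pair q ν hν0 hd (T i) (T (i-1)) hb.symm
      (hκT i (by omega) h2).1 (hκT (i-1) (by omega) (by omega)).1
      hdn.1 hdn.2 hup.1 hup.2
end
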